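/- arXiv:1407.8391 — 3 statements merged into one kernel-verified Lean document; each statement's English description precedes it below -/
import Mathlib

section
/- For all sufficiently large integers n and every integer q ≥ 0.49·n, in the (q:1) Waiter-Client game on E(K_n) Client has a strategy to ensure that at the end of the game the minimum degree of Client's graph is at most one, i.e., some vertex of Client's graph has degree at most 1. -/
open SimpleGraph

/-- In the Waiter-Client game with bias `q`, set of free elements `F` and set `C` of elements
claimed so far by Client, Client has a strategy to ensure that the final set of elements
claimed by him satisfies `P`.  In every round Waiter offers `q + 1` free elements, Client
claims one of them and the remaining `q` go to Waiter; when fewer than `q + 1` free elements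
remain, Waiter claims all of them and the game ends. -/
def ClientCanEnsure {α : Type*} [DecidableEq α] (q : ℕ) (P : Finset α → Prop)
    (F C : Finset α) : Prop :=
  if F.card < q + 1 then P C
  else ∀ O ⊆ F, O.card = q + 1 → ∃ x ∈ O, ClientCanEnsure q P (F \ O) (insert x C)
  termination_by F.card
  decreasing_by
    have h1 : O.Nonempty := by rw [← Finset.card_pos]; omega
    have h2 := Finset.card_sdiff_of_subset ‹O ⊆ F›
    have h3 := Finset.card_le_card ‹O ⊆ F›
    have h4 := Finset.card_pos.mpr h1
    omega

/-- In the Waiter-Client game with bias `q`, set of free elements `F` and set `C` of elements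
claimed so far by Client, Waiter has a strategy to ensure that the final set of elements
claimed by Client satisfies `P`.  In every round Waiter offers `q + 1` free elements, Client
claims one of them and the remaining `q` go to Waiter; when fewer than `q + 1` free elements
remain, Waiter claims all of them and the game ends.  (The hypothesis `O ⊆ F` guarding the
recursive call is redundant; it is only there to justify termination.) -/
def WaiterCanForce {α : Type*} [DecidableEq α] (q : ℕ) (P : Finset α → Prop)
    (F C : Finset α) : Prop :=
  if F.card < q + 1 then P C
  else ∃ O ⊆ F, O.card = q + 1 ∧
    ∀ x ∈ O, O ⊆ F → WaiterCanForce q P (F \ O) (insert x C)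
  termination_by F.card
  decreasing_by
    have h1 : O.Nonempty := ⟨x, ‹x ∈ O›⟩
    have h2 := Finset.card_sdiff_of_subset ‹O ⊆ F›
    have h3 := Finset.card_le_card ‹O ⊆ F›
    have h4 := Finset.card_pos.mpr h1
    omega

/-- Client's graph: the simple graph on `V` whose edges are the elements claimed by Client. -/
def clientGraph {V : Type*} (C : Finset (Sym2 V)) : SimpleGraph V :=
  SimpleGraph.fromEdgeSet ↑C

/-- The board of the game played on `E(K_n)`: all non-loop edges of the complete graph `K_n`. -/
def knBoard (n : ℕ) : Finset (Sym2 (Fin n)) :=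
  Finset.univ.filter fun e => ¬ e.IsDiag

open Finset

namespace S4
variable {n : ℕ}

/-- number of edges in `E` incident to `v` -/
def dC (E : Finset (Sym2 (Fin n))) (v : Fin n) : ℕ := (E.filter (fun e => v ∈ e)).card

lemma dC_swap (S : Finset (Fin n)) (E : Finset (Sym2 (Fin n))) :
    ∑ v ∈ S, dC E v = ∑ e ∈ E, (S.filter (fun v => v ∈ e)).card := by
  simp only [dC, Finset.card_filter]
  rw [Finset.sum_comm]

lemma ends_card {e : Sym2 (Fin n)} (he : ¬ e.IsDiag) :
    (univ.filter (fun v => v ∈ e)).card = 2 := by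
  induction e using Sym2.ind with
  | _ a b =>
    have hab : a ≠ b := by
      intro h; exact he (by simp [Sym2.isDiag_iff_proj_eq, h])
    have : (univ.filter (fun v => v ∈ s(a,b))) = {a, b} := by
      ext v; simp [Sym2.mem_iff]
    rw [this, Finset.card_insert_of_notMem (by simp [hab]), Finset.card_singleton]

lemma sum_dC_univ {F : Finset (Sym2 (Fin n))} (hF : F ⊆ knBoard n) :
    ∑ v : Fin n, dC F v = 2 * F.card := by
  rw [dC_swap]
  rw [Finset.sum_congr rfl (fun e heF => ends_card (by simpa [knBoard] using hF heF))]
  simp [mul_comm]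


variable {q : ℕ}

lemma dC_le {E F : Finset (Sym2 (Fin n))} (h : E ⊆ F) (v : Fin n) : dC E v ≤ dC F v :=
  Finset.card_le_card (Finset.filter_subset_filter _ h)

lemma dC_sdiff {O F : Finset (Sym2 (Fin n))} (h : O ⊆ F) (v : Fin n) :
    dC (F \ O) v = dC F v - dC O v := by
  unfold dC
  have h1 : (F \ O).filter (fun e => v ∈ e) = F.filter (fun e => v ∈ e) \ O.filter (fun e => v ∈ e) := by
    ext e; simp only [Finset.mem_filter, Finset.mem_sdiff]; tauto
  rw [h1, Finset.card_sdiff_of_subset (Finset.filter_subset_filter _ h)]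

lemma dC_insert {x : Sym2 (Fin n)} {C : Finset (Sym2 (Fin n))} (hx : x ∉ C) (v : Fin n) :
    dC (insert x C) v = dC C v + (if v ∈ x then 1 else 0) := by
  unfold dC
  rw [Finset.filter_insert]
  split
  · rw [Finset.card_insert_of_notMem (fun hc => hx (Finset.mem_of_mem_filter x hc))]
  · rw [add_zero]

/-- live set: vertices of Client degree ≤ 1 -/
def liveS (C : Finset (Sym2 (Fin n))) : Finset (Fin n) := univ.filter (fun v => dC C v ≤ 1)

def deadS (C : Finset (Sym2 (Fin n))) : Finset (Fin n) := univ.filter (fun v => ¬ dC C v ≤ 1)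

def NN (C : Finset (Sym2 (Fin n))) : ℤ := ∑ v : Fin n, ((2:ℤ) - (min (dC C v) 2 : ℕ))

def SG (q ℓ : ℕ) : ℤ := ∑ j ∈ range ℓ, max ((q:ℤ) + 1 - j) 0

def DD (F C : Finset (Sym2 (Fin n))) : ℤ := ∑ v ∈ deadS C, (dC F v : ℤ)

def lamE (C : Finset (Sym2 (Fin n))) (e : Sym2 (Fin n)) : ℕ :=
  (univ.filter (fun v => v ∈ e ∧ dC C v ≤ 1)).card

def pot (q : ℕ) (F C : Finset (Sym2 (Fin n))) : ℤ :=
  4*((q:ℤ)+1)^2 * ((F.card / (q+1) : ℕ) : ℤ) - 2*((q:ℤ)+1)^2 * NN C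
    - ((q:ℤ)+1) * (SG q (liveS C).card + DD F C) + (F.card : ℤ)

lemma mem_knBoard {e : Sym2 (Fin n)} : e ∈ knBoard n ↔ ¬ e.IsDiag := by
  simp [knBoard]

lemma sym2_rep (x : Sym2 (Fin n)) : ∃ a b, x = s(a, b) := by
  induction x using Sym2.ind with
  | _ a b => exact ⟨a, b, rfl⟩

lemma ne_of_mem_knBoard {a b : Fin n} (h : s(a,b) ∈ knBoard n) : a ≠ b := by
  rw [mem_knBoard] at h
  intro hab; exact h (by simp [Sym2.isDiag_iff_proj_eq, hab])

lemma pair_filter_card {a b : Fin n} (hab : a ≠ b) (p : Fin n → Prop) [DecidablePred p] :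
    (({a, b} : Finset (Fin n)).filter p).card
      = (if p a then 1 else 0) + (if p b then 1 else 0) := by
  rw [Finset.card_filter, Finset.sum_pair hab]

lemma filter_mem_pair {a b : Fin n} (p : Fin n → Prop) [DecidablePred p] :
    univ.filter (fun v => v ∈ s(a,b) ∧ p v) = ({a, b} : Finset (Fin n)).filter p := by
  ext v; simp [Sym2.mem_iff]

lemma lamE_le_two {C : Finset (Sym2 (Fin n))} {e : Sym2 (Fin n)} (he : ¬ e.IsDiag) :
    lamE C e ≤ 2 := by
  have h1 : (univ.filter (fun v => v ∈ e ∧ dC C v ≤ 1)) ⊆ univ.filter (fun v => v ∈ e) := by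
    intro v hv; simp only [Finset.mem_filter] at *; exact ⟨hv.1, hv.2.1⟩
  calc lamE C e ≤ (univ.filter (fun v => v ∈ e)).card := Finset.card_le_card h1
    _ = 2 := ends_card he

lemma lamE_add_dead {C : Finset (Sym2 (Fin n))} {e : Sym2 (Fin n)} (he : ¬ e.IsDiag) :
    lamE C e + ((deadS C).filter (fun v => v ∈ e)).card = 2 := by
  have h1 : univ.filter (fun v => v ∈ e ∧ dC C v ≤ 1)
      = (univ.filter (fun v => v ∈ e)).filter (fun v => dC C v ≤ 1) := by
    rw [Finset.filter_filter]
  have h2 : (deadS C).filter (fun v => v ∈ e)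
      = (univ.filter (fun v => v ∈ e)).filter (fun v => ¬ dC C v ≤ 1) := by
    unfold deadS; rw [Finset.filter_filter, Finset.filter_filter]
    apply Finset.filter_congr; intro v _; tauto
  rw [lamE, h1, h2, Finset.card_filter_add_card_filter_not, ends_card he]

lemma lamE_all_live {C : Finset (Sym2 (Fin n))} {e : Sym2 (Fin n)} (he : ¬ e.IsDiag)
    (h2 : lamE C e = 2) {v : Fin n} (hv : v ∈ e) : dC C v ≤ 1 := by
  have h := lamE_add_dead (C := C) he
  rw [h2] at h
  have hdead : ((deadS C).filter (fun v => v ∈ e)).card = 0 := by omega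
  rw [Finset.card_eq_zero] at hdead
  by_contra hlive
  have : v ∈ (deadS C).filter (fun v => v ∈ e) := by
    simp only [deadS, Finset.mem_filter, Finset.mem_univ, true_and]
    exact ⟨hlive, hv⟩
  rw [hdead] at this; exact absurd this (Finset.notMem_empty v)

lemma tdiff (d : ℕ) :
    ((2:ℤ) - (min (d+1) 2 : ℕ)) = ((2:ℤ) - (min d 2 : ℕ)) - (if d ≤ 1 then 1 else 0) := by
  split_ifs with h
  · rw [Nat.min_eq_left (by omega), Nat.min_eq_left (by omega)]
    push_cast; ring
  · rw [Nat.min_eq_right (by omega), Nat.min_eq_right (by omega)]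
    push_cast
    try ring

lemma sum_fix2 {a b : Fin n} (hab : a ≠ b) (g : Fin n → ℤ)
    (h0 : ∀ v, v ≠ a → v ≠ b → g v = 0) : ∑ v : Fin n, g v = g a + g b := by
  rw [← Finset.sum_pair hab]
  exact (Finset.sum_subset (Finset.subset_univ _)
    (fun v _ hv => h0 v (fun h => hv (by simp [h])) (fun h => hv (by simp [h])))).symm

lemma NN_insert {C : Finset (Sym2 (Fin n))} {a b : Fin n} (hab : a ≠ b)
    (hx : s(a,b) ∉ C) :
    NN (insert (s(a,b)) C) = NN C - (if dC C a ≤ 1 then 1 else 0)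
      - (if dC C b ≤ 1 then 1 else 0) := by
  have key : ∀ v : Fin n, ((2:ℤ) - (min (dC (insert (s(a,b)) C) v) 2 : ℕ))
      = ((2:ℤ) - (min (dC C v) 2 : ℕ))
        - (if v ∈ s(a,b) then (if dC C v ≤ 1 then 1 else 0) else 0) := by
    intro v
    rw [dC_insert hx v]
    by_cases hv : v ∈ s(a,b)
    · rw [if_pos hv, if_pos hv, tdiff]
    · rw [if_neg hv, if_neg hv, add_zero, sub_zero]
  unfold NN
  rw [Finset.sum_congr rfl (fun v _ => key v), Finset.sum_sub_distrib]
  have h2 : ∑ v : Fin n, (if v ∈ s(a,b) then (if dC C v ≤ 1 then 1 else 0) else (0:ℤ))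
      = (if dC C a ≤ 1 then 1 else 0) + (if dC C b ≤ 1 then 1 else 0) := by
    rw [sum_fix2 hab]
    · simp [Sym2.mem_iff]
    · intro v hva hvb
      rw [if_neg (by simp [Sym2.mem_iff, hva, hvb])]
  rw [h2]; ring

/-- the set of vertices dying when Client claims `x` -/
def dyS (C : Finset (Sym2 (Fin n))) (x : Sym2 (Fin n)) : Finset (Fin n) :=
  univ.filter (fun v => v ∈ x ∧ dC C v = 1)

lemma dyS_subset_live {C : Finset (Sym2 (Fin n))} {x : Sym2 (Fin n)} :
    dyS C x ⊆ liveS C := by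
  intro v hv
  simp only [dyS, liveS, Finset.mem_filter, Finset.mem_univ, true_and] at *
  omega

lemma liveS_insert {C : Finset (Sym2 (Fin n))} {x : Sym2 (Fin n)} (hx : x ∉ C) :
    liveS (insert x C) = liveS C \ dyS C x := by
  ext v
  simp only [liveS, dyS, Finset.mem_filter, Finset.mem_sdiff, Finset.mem_univ, true_and,
    dC_insert hx v]
  by_cases hv : v ∈ x
  · rw [if_pos hv]; simp [hv]; omega
  · rw [if_neg hv]; simp [hv]

lemma deadS_insert {C : Finset (Sym2 (Fin n))} {x : Sym2 (Fin n)} (hx : x ∉ C) :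
    deadS (insert x C) = deadS C ∪ dyS C x := by
  ext v
  simp only [deadS, dyS, Finset.mem_filter, Finset.mem_union, Finset.mem_univ, true_and,
    dC_insert hx v]
  by_cases hv : v ∈ x
  · rw [if_pos hv]; simp [hv]; omega
  · rw [if_neg hv]; simp [hv]

lemma deadS_disj_dyS {C : Finset (Sym2 (Fin n))} {x : Sym2 (Fin n)} :
    Disjoint (deadS C) (dyS C x) := by
  rw [Finset.disjoint_left]
  intro v hv hv'
  simp only [deadS, dyS, Finset.mem_filter, Finset.mem_univ, true_and] at *
  omega

lemma DD_update {F O C : Finset (Sym2 (Fin n))} {x : Sym2 (Fin n)} (hx : x ∉ C)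
    (hO : O ⊆ F) :
    DD (F \ O) (insert x C) = DD F C - (∑ v ∈ deadS C, (dC O v : ℤ))
      + ∑ v ∈ dyS C x, (dC (F \ O) v : ℤ) := by
  unfold DD
  rw [deadS_insert hx, Finset.sum_union deadS_disj_dyS]
  congr 1
  rw [← Finset.sum_sub_distrib]
  apply Finset.sum_congr rfl
  intro v _
  rw [dC_sdiff hO]
  have := dC_le hO v
  push_cast [Nat.cast_sub (dC_le hO v)]
  ring

lemma SG_succ (q ℓ : ℕ) : SG q (ℓ+1) = SG q ℓ + max ((q:ℤ)+1-ℓ) 0 :=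
  Finset.sum_range_succ _ _

lemma SG_nonneg (q ℓ : ℕ) : 0 ≤ SG q ℓ :=
  Finset.sum_nonneg (fun j _ => le_max_right _ _)

lemma dCO_lt_live {C O : Finset (Sym2 (Fin n))} (hObd : ∀ e ∈ O, ¬ e.IsDiag)
    (hOl : ∀ e ∈ O, lamE C e = 2) {v : Fin n} (hv : dC C v ≤ 1) :
    dC O v + 1 ≤ (liveS C).card := by
  classical
  have hvlive : v ∈ liveS C := by simp [liveS, hv]
  have hcard : (liveS C \ {v}).card = (liveS C).card - 1 := by
    rw [Finset.card_sdiff_of_subset (by simpa using hvlive)]; simp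
  have hle : dC O v ≤ (liveS C \ {v}).card := by
    apply Finset.card_le_card_of_injOn (fun e => if h : v ∈ e then Sym2.Mem.other' h else v)
    · intro e he
      rw [Finset.mem_coe, Finset.mem_filter] at he
      obtain ⟨heO, hve⟩ := he
      simp only [Finset.mem_coe]
      rw [dif_pos hve]
      have hoe : Sym2.Mem.other' hve ∈ e := Sym2.other_mem' hve
      have hne : Sym2.Mem.other' hve ≠ v := by
        intro hEq
        apply hObd e heO
        have : s(v, Sym2.Mem.other' hve) = e := Sym2.other_spec' hve
        rw [← this, hEq]
        simp [Sym2.isDiag_iff_proj_eq]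
      rw [Finset.mem_sdiff]
      constructor
      · simp only [liveS, Finset.mem_filter, Finset.mem_univ, true_and]
        exact lamE_all_live (hObd e heO) (hOl e heO) hoe
      · simpa using hne
    · intro e₁ h₁ e₂ h₂ hEq
      simp only [Finset.coe_filter, Set.mem_setOf_eq] at h₁ h₂
      obtain ⟨_, hv1⟩ := h₁
      obtain ⟨_, hv2⟩ := h₂
      simp only [] at hEq
      rw [dif_pos hv1, dif_pos hv2] at hEq
      have e1s : s(v, Sym2.Mem.other' hv1) = e₁ := Sym2.other_spec' hv1
      have e2s : s(v, Sym2.Mem.other' hv2) = e₂ := Sym2.other_spec' hv2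
      rw [← e1s, ← e2s, hEq]
  have hpos : 1 ≤ (liveS C).card := Finset.card_pos.mpr ⟨v, hvlive⟩
  omega

lemma CD_bound {C O : Finset (Sym2 (Fin n))} (hObd : ∀ e ∈ O, ¬ e.IsDiag)
    {lam : ℕ} (hlam2 : lam ≤ 2) (hlam : ∀ e ∈ O, lam ≤ lamE C e) :
    ∑ v ∈ deadS C, dC O v ≤ O.card * (2 - lam) := by
  rw [dC_swap]
  calc ∑ e ∈ O, ((deadS C).filter (fun v => v ∈ e)).card
      ≤ ∑ e ∈ O, (2 - lam) := by
        apply Finset.sum_le_sum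
        intro e he
        have h := lamE_add_dead (C := C) (hObd e he)
        have := hlam e he
        omega
    _ = O.card * (2 - lam) := by rw [Finset.sum_const, smul_eq_mul]

lemma dyS_pair {C : Finset (Sym2 (Fin n))} {a b : Fin n} :
    dyS C (s(a,b)) = ({a, b} : Finset (Fin n)).filter (fun v => dC C v = 1) := by
  unfold dyS; exact filter_mem_pair _

lemma sum_pair_filter {a b : Fin n} (hab : a ≠ b) (p : Fin n → Prop) [DecidablePred p]
    (g : Fin n → ℤ) :
    ∑ v ∈ ({a, b} : Finset (Fin n)).filter p, g v
      = (if p a then g a else 0) + (if p b then g b else 0) := by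
  rw [Finset.sum_filter, Finset.sum_pair hab]

lemma lamE_pair {C : Finset (Sym2 (Fin n))} {a b : Fin n} (hab : a ≠ b) :
    lamE C (s(a,b)) = (if dC C a ≤ 1 then 1 else 0) + (if dC C b ≤ 1 then 1 else 0) := by
  rw [lamE, filter_mem_pair, pair_filter_card hab]

lemma dyS_card_pair {C : Finset (Sym2 (Fin n))} {a b : Fin n} (hab : a ≠ b) :
    (dyS C (s(a,b))).card = (if dC C a = 1 then 1 else 0) + (if dC C b = 1 then 1 else 0) := by
  rw [dyS_pair, pair_filter_card hab]

lemma Snew_pair {C E : Finset (Sym2 (Fin n))} {a b : Fin n} (hab : a ≠ b) :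
    ∑ v ∈ dyS C (s(a,b)), (dC E v : ℤ)
      = (if dC C a = 1 then (dC E a : ℤ) else 0) + (if dC C b = 1 then (dC E b : ℤ) else 0) := by
  rw [dyS_pair, sum_pair_filter hab]

lemma pot_step {q : ℕ} {F O C : Finset (Sym2 (Fin n))}
    (hFb : F ⊆ knBoard n) (hCF : ∀ y ∈ C, y ∉ F)
    (hO : O ⊆ F) (hOcard : O.card = q + 1)
    (hrich : ∀ v : Fin n, dC C v ≤ 1 → (2 - dC C v) * (q+1) ≤ dC F v) :
    ∃ x ∈ O, pot q (F \ O) (insert x C) ≤ pot q F C := by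
  classical
  have hOne : O.Nonempty := by rw [← Finset.card_pos]; omega
  obtain ⟨x, hxO, hmin⟩ := Finset.exists_min_image O (lamE C) hOne
  refine ⟨x, hxO, ?_⟩
  obtain ⟨a, b, rfl⟩ := sym2_rep x
  have hxkn : s(a,b) ∈ knBoard n := hFb (hO hxO)
  have hab : a ≠ b := ne_of_mem_knBoard hxkn
  have hxC : s(a,b) ∉ C := fun h => hCF _ h (hO hxO)
  have hObd : ∀ e ∈ O, ¬ e.IsDiag := fun e he => mem_knBoard.mp (hFb (hO he))
  have hqF : q + 1 ≤ F.card := by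
    have := Finset.card_le_card hO; omega
  -- abbreviations
  set Q : ℤ := (q:ℤ) + 1 with hQ
  have hQpos : (0:ℤ) < Q := by rw [hQ]; positivity
  set LL := (liveS C).card with hLLdef
  set k := (dyS C (s(a,b))).card with hkdef
  have hksub : dyS C (s(a,b)) ⊆ liveS C := dyS_subset_live
  have hkLL : k ≤ LL := Finset.card_le_card hksub
  have hLL' : (liveS (insert (s(a,b)) C)).card = LL - k := by
    rw [liveS_insert hxC, Finset.card_sdiff_of_subset hksub]
  have hNN' := NN_insert hab hxC
  have hDD' := DD_update (F := F) (O := O) hxC hO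
  have hf' : (F \ O).card = F.card - (q+1) := by
    rw [Finset.card_sdiff_of_subset hO, hOcard]
  have hdiv : (F.card - (q+1)) / (q+1) + 1 = F.card / (q+1) := by
    conv_rhs => rw [← Nat.sub_add_cancel hqF]
    rw [Nat.add_div_right _ (by omega)]
  -- the three ℤ quantities
  set ila : ℤ := (if dC C a ≤ 1 then 1 else 0) with hila
  set ilb : ℤ := (if dC C b ≤ 1 then 1 else 0) with hilb
  set CD : ℤ := ∑ v ∈ deadS C, (dC O v : ℤ) with hCDdef
  set Snew : ℤ := ∑ v ∈ dyS C (s(a,b)), (dC (F \ O) v : ℤ) with hSnewdef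
  -- potential difference identity
  have hdiff : pot q (F \ O) (insert (s(a,b)) C) - pot q F C
      = Q * (-(4*Q) + 2*Q*(ila + ilb) - (SG q (LL - k) - SG q LL) + CD - Snew - 1) := by
    unfold pot
    rw [hNN', hDD', hLL', hf']
    have hc1 : (((F.card - (q+1)) / (q+1) : ℕ) : ℤ) = ((F.card / (q+1) : ℕ) : ℤ) - 1 := by
      rw [← hdiv]; push_cast; ring
    have hc2 : ((F.card - (q+1) : ℕ) : ℤ) = (F.card : ℤ) - ((q:ℤ)+1) := by
      rw [Nat.cast_sub hqF]; push_cast; ring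
    rw [hc1, hc2, ← hQ]
    ring
  -- it suffices to bound the bracket
  have hbracket : -(4*Q) + 2*Q*(ila + ilb) - (SG q (LL - k) - SG q LL) + CD - Snew - 1 ≤ 0 := by
    have hlam2 : lamE C (s(a,b)) ≤ 2 := lamE_le_two (mem_knBoard.mp hxkn)
    have hlamZ : ((lamE C (s(a,b)) : ℕ) : ℤ) = ila + ilb := by
      rw [lamE_pair hab, hila, hilb]; push_cast; split_ifs <;> norm_num
    have hCDb : CD ≤ Q * (2 - (ila + ilb)) := by
      rw [← hlamZ]
      have h1 := CD_bound (C := C) (O := O) hObd hlam2 hmin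
      have h2 : CD = ((∑ v ∈ deadS C, dC O v : ℕ) : ℤ) := by rw [hCDdef]; push_cast; rfl
      rw [h2]
      calc ((∑ v ∈ deadS C, dC O v : ℕ) : ℤ)
          ≤ ((O.card * (2 - lamE C (s(a,b))) : ℕ) : ℤ) := by exact_mod_cast h1
        _ = Q * (2 - ((lamE C (s(a,b)) : ℕ) : ℤ)) := by
            rw [Nat.cast_mul, Nat.cast_sub hlam2, hOcard, hQ]; push_cast; ring
    have hSnew0 : 0 ≤ Snew := by
      rw [hSnewdef]
      exact Finset.sum_nonneg (fun v _ => Int.natCast_nonneg _)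
    have hkval : k = (if dC C a = 1 then 1 else 0) + (if dC C b = 1 then 1 else 0) := by
      rw [hkdef]; exact dyS_card_pair hab
    have hSGstep : ∀ m : ℕ, 1 ≤ m → SG q m = SG q (m-1) + max (Q - ((m:ℤ) - 1)) 0 := by
      intro m hm
      have h := SG_succ q (m-1)
      rw [Nat.sub_add_cancel hm] at h
      have hc : ((q:ℤ)+1) - ((m-1 : ℕ) : ℤ) = Q - ((m:ℤ) - 1) := by
        rw [Nat.cast_sub hm, hQ]; push_cast; ring
      rw [h, hc]
    by_cases hla : dC C a ≤ 1 <;> by_cases hlb : dC C b ≤ 1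
    · -- both endpoints live
      have hlamx : lamE C (s(a,b)) = 2 := by
        rw [lamE_pair hab, if_pos hla, if_pos hlb]
      have hOl : ∀ e ∈ O, lamE C e = 2 := by
        intro e he
        have h1 := hmin e he
        rw [hlamx] at h1
        exact le_antisymm (lamE_le_two (hObd e he)) h1
      have hila1 : ila = 1 := if_pos hla
      have hilb1 : ilb = 1 := if_pos hlb
      have hCD0 : CD ≤ 0 := by
        have := hCDb; rw [hila1, hilb1] at this; linarith
      have hdy : ∀ v : Fin n, dC C v = 1 →
          max (Q - ((LL:ℤ) - 1)) 0 ≤ (dC (F \ O) v : ℤ) := by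
        intro v hv1
        have hvl : dC C v ≤ 1 := by omega
        have h1 : q + 1 ≤ dC F v := by
          have := hrich v hvl; rw [hv1] at this; omega
        have h2 : dC O v + 1 ≤ LL := dCO_lt_live hObd hOl hvl
        have h4 : dC O v ≤ dC F v := dC_le hO v
        have h3 : ((dC (F \ O) v : ℕ) : ℤ) = (dC F v : ℤ) - (dC O v : ℤ) := by
          rw [dC_sdiff hO v, Nat.cast_sub h4]
        apply max_le
        · rw [h3, hQ]
          have hc1 : ((q:ℤ)+1) ≤ (dC F v : ℤ) := by exact_mod_cast h1
          have hc2 : (dC O v : ℤ) + 1 ≤ (LL:ℤ) := by exact_mod_cast h2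
          linarith
        · exact Int.natCast_nonneg _
      by_cases hda : dC C a = 1 <;> by_cases hdb : dC C b = 1
      · -- both die
        have hk2 : k = 2 := by rw [hkval, if_pos hda, if_pos hdb]
        have hLL2 : 2 ≤ LL := by
          have hsub : ({a, b} : Finset (Fin n)) ⊆ liveS C := by
            intro v hv
            simp only [Finset.mem_insert, Finset.mem_singleton] at hv
            rcases hv with rfl | rfl <;>
              simp only [liveS, Finset.mem_filter, Finset.mem_univ, true_and] <;> assumption
          have h2 : ({a,b} : Finset (Fin n)).card = 2 := by
            rw [Finset.card_insert_of_notMem (by simp [hab]), Finset.card_singleton]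
          calc 2 = ({a,b} : Finset (Fin n)).card := h2.symm
            _ ≤ LL := Finset.card_le_card hsub
        have hs1 : SG q LL = SG q (LL-1) + max (Q - ((LL:ℤ) - 1)) 0 := hSGstep LL (by omega)
        have hs2 : SG q (LL-1) = SG q (LL-1-1) + max (Q - (((LL-1:ℕ):ℤ) - 1)) 0 :=
          hSGstep (LL-1) (by omega)
        have hcast1 : ((LL-1:ℕ):ℤ) = (LL:ℤ) - 1 := by omega
        have hLL11 : LL - 1 - 1 = LL - 2 := by omega
        rw [hcast1, hLL11] at hs2
        have hSnewv : Snew = (dC (F\O) a : ℤ) + (dC (F\O) b : ℤ) := by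
          rw [hSnewdef, Snew_pair hab, if_pos hda, if_pos hdb]
        have hma := hdy a hda
        have hmb := hdy b hdb
        have hm2 : max (Q - ((LL:ℤ) - 1 - 1)) 0 ≤ max (Q - ((LL:ℤ)-1)) 0 + 1 := by
          apply max_le
          · have := le_max_left (Q - ((LL:ℤ)-1)) 0; linarith
          · have := le_max_right (Q - ((LL:ℤ)-1)) 0; linarith
        rw [hk2, hila1, hilb1, hs1, hs2, hSnewv]
        linarith
      · -- only a dies
        have hk1 : k = 1 := by rw [hkval, if_pos hda, if_neg hdb]
        have hLL1 : 1 ≤ LL := by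
          apply Finset.card_pos.mpr
          exact ⟨a, by simp only [liveS, Finset.mem_filter, Finset.mem_univ, true_and]; exact hla⟩
        have hs1 : SG q LL = SG q (LL-1) + max (Q - ((LL:ℤ) - 1)) 0 := hSGstep LL hLL1
        have hSnewv : Snew = (dC (F\O) a : ℤ) := by
          rw [hSnewdef, Snew_pair hab, if_pos hda, if_neg hdb, add_zero]
        have hma := hdy a hda
        rw [hk1, hila1, hilb1, hs1, hSnewv]
        linarith
      · -- only b dies
        have hk1 : k = 1 := by rw [hkval, if_neg hda, if_pos hdb]
        have hLL1 : 1 ≤ LL := by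
          apply Finset.card_pos.mpr
          exact ⟨b, by simp only [liveS, Finset.mem_filter, Finset.mem_univ, true_and]; exact hlb⟩
        have hs1 : SG q LL = SG q (LL-1) + max (Q - ((LL:ℤ) - 1)) 0 := hSGstep LL hLL1
        have hSnewv : Snew = (dC (F\O) b : ℤ) := by
          rw [hSnewdef, Snew_pair hab, if_neg hda, if_pos hdb, zero_add]
        have hmb := hdy b hdb
        rw [hk1, hila1, hilb1, hs1, hSnewv]
        linarith
      · -- nobody dies
        have hk0 : k = 0 := by rw [hkval, if_neg hda, if_neg hdb]
        have hLLk : LL - k = LL := by omega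
        rw [hLLk, hila1, hilb1]
        linarith
    · -- a live, b dead
      have hila1 : ila = 1 := if_pos hla
      have hilb0 : ilb = 0 := if_neg hlb
      have hCD1 : CD ≤ Q := by
        have := hCDb; rw [hila1, hilb0] at this; linarith
      by_cases hda : dC C a = 1
      · have hk1 : k = 1 := by rw [hkval, if_pos hda, if_neg (by omega)]
        have hLL1 : 1 ≤ LL := by
          apply Finset.card_pos.mpr
          exact ⟨a, by simp only [liveS, Finset.mem_filter, Finset.mem_univ, true_and]; exact hla⟩
        have hs1 : SG q LL = SG q (LL-1) + max (Q - ((LL:ℤ) - 1)) 0 := hSGstep LL hLL1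
        have hmQ : max (Q - ((LL:ℤ) - 1)) 0 ≤ Q := by
          apply max_le
          · have : (0:ℤ) ≤ (LL:ℤ) - 1 := by
              have : (1:ℤ) ≤ (LL:ℤ) := by exact_mod_cast hLL1
              linarith
            linarith
          · linarith
        rw [hk1, hila1, hilb0, hs1]
        linarith
      · have hk0 : k = 0 := by rw [hkval, if_neg hda, if_neg (by omega)]
        have hLLk : LL - k = LL := by omega
        rw [hLLk, hila1, hilb0]
        linarith
    · -- a dead, b live
      have hila0 : ila = 0 := if_neg hla
      have hilb1 : ilb = 1 := if_pos hlb
      have hCD1 : CD ≤ Q := by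
        have := hCDb; rw [hila0, hilb1] at this; linarith
      by_cases hdb : dC C b = 1
      · have hk1 : k = 1 := by rw [hkval, if_neg (by omega), if_pos hdb]
        have hLL1 : 1 ≤ LL := by
          apply Finset.card_pos.mpr
          exact ⟨b, by simp only [liveS, Finset.mem_filter, Finset.mem_univ, true_and]; exact hlb⟩
        have hs1 : SG q LL = SG q (LL-1) + max (Q - ((LL:ℤ) - 1)) 0 := hSGstep LL hLL1
        have hmQ : max (Q - ((LL:ℤ) - 1)) 0 ≤ Q := by
          apply max_le
          · have : (1:ℤ) ≤ (LL:ℤ) := by exact_mod_cast hLL1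
            linarith
          · linarith
        rw [hk1, hila0, hilb1, hs1]
        linarith
      · have hk0 : k = 0 := by rw [hkval, if_neg (by omega), if_neg hdb]
        have hLLk : LL - k = LL := by omega
        rw [hLLk, hila0, hilb1]
        linarith
    · -- both dead
      have hila0 : ila = 0 := if_neg hla
      have hilb0 : ilb = 0 := if_neg hlb
      have hCD2 : CD ≤ 2*Q := by
        have := hCDb; rw [hila0, hilb0] at this; linarith
      have hk0 : k = 0 := by rw [hkval, if_neg (by omega), if_neg (by omega)]
      have hLLk : LL - k = LL := by omega
      rw [hLLk, hila0, hilb0]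
      linarith
  have : pot q (F \ O) (insert (s(a,b)) C) - pot q F C ≤ 0 := by
    rw [hdiff]
    exact mul_nonpos_of_nonneg_of_nonpos (le_of_lt hQpos) hbracket
  linarith

lemma P_of_live {C : Finset (Sym2 (Fin n))} {v : Fin n} (h : dC C v ≤ 1) :
    ∃ w : Fin n, ((clientGraph C).neighborSet w).ncard ≤ 1 := by
  refine ⟨v, ?_⟩
  have hle : ((clientGraph C).neighborSet v).ncard
      ≤ ((↑(C.filter (fun e => v ∈ e)) : Set (Sym2 (Fin n)))).ncard := by
    apply Set.ncard_le_ncard_of_injOn (fun w => s(v, w))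
    · intro w hw
      rw [SimpleGraph.mem_neighborSet, clientGraph, SimpleGraph.fromEdgeSet_adj] at hw
      simp only [Finset.coe_filter, Set.mem_setOf_eq]
      exact ⟨by exact_mod_cast hw.1, by simp⟩
    · intro w1 hw1 w2 hw2 hEq
      have h1 : v ≠ w1 := ((clientGraph C).mem_neighborSet v w1).mp hw1 |>.ne
      simp only [Sym2.eq_iff] at hEq
      rcases hEq with ⟨_, h⟩ | ⟨h1', h2⟩
      · exact h
      · exact h2.trans h1'
  rw [Set.ncard_coe_finset] at hle
  exact le_trans hle h

lemma dC_insert_le (x : Sym2 (Fin n)) (C : Finset (Sym2 (Fin n))) (v : Fin n) :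
    dC (insert x C) v ≤ dC C v + 1 := by
  unfold dC
  rw [Finset.filter_insert]
  split
  · exact Finset.card_insert_le _ _
  · omega

lemma dC_insert_not_mem {x : Sym2 (Fin n)} {C : Finset (Sym2 (Fin n))} {v : Fin n}
    (hv : v ∉ x) : dC (insert x C) v = dC C v := by
  unfold dC
  rw [Finset.filter_insert, if_neg hv]

lemma pot_endgame {q : ℕ} {F C : Finset (Sym2 (Fin n))} (hFb : F ⊆ knBoard n)
    (hdead : ∀ v : Fin n, ¬ dC C v ≤ 1) (hsmall : F.card ≤ q) :
    -2*((q:ℤ)+1)^2 < pot q F C := by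
  have hNN : NN C = 0 := by
    apply Finset.sum_eq_zero
    intro v _
    have : min (dC C v) 2 = 2 := Nat.min_eq_right (by have := hdead v; omega)
    rw [this]
    norm_num
  have hlive : (liveS C).card = 0 := by
    rw [Finset.card_eq_zero]
    unfold liveS
    rw [Finset.filter_false_of_mem (fun v _ => hdead v)]
  have hSG0 : SG q 0 = 0 := by simp [SG]
  have hDD : DD F C ≤ 2 * (F.card : ℤ) := by
    unfold DD
    calc ∑ v ∈ deadS C, (dC F v : ℤ) ≤ ∑ v : Fin n, (dC F v : ℤ) := by
          apply Finset.sum_le_sum_of_subset_of_nonneg (Finset.subset_univ _)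
          intro v _ _
          exact Int.natCast_nonneg _
      _ = ((∑ v : Fin n, dC F v : ℕ) : ℤ) := by push_cast; rfl
      _ = 2 * (F.card : ℤ) := by rw [sum_dC_univ hFb]; push_cast; ring
  have hdiv0 : (0:ℤ) ≤ 4*((q:ℤ)+1)^2 * ((F.card / (q+1) : ℕ) : ℤ) := by positivity
  have hQ0 : (0:ℤ) ≤ (q:ℤ) + 1 := by positivity
  have hFq : (F.card : ℤ) ≤ (q:ℤ) := by exact_mod_cast hsmall
  have hF0 : (0:ℤ) ≤ (F.card : ℤ) := Int.natCast_nonneg _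
  unfold pot
  rw [hNN, hlive, hSG0]
  have h1 : ((q:ℤ)+1) * (0 + DD F C) ≤ ((q:ℤ)+1) * (2 * (F.card:ℤ)) := by
    apply mul_le_mul_of_nonneg_left _ hQ0
    linarith
  nlinarith

/-- Protection strategy. -/
lemma client_protect (q : ℕ) : ∀ (N : ℕ) (F C : Finset (Sym2 (Fin n))), F.card ≤ N →
    (∃ v, dC C v ≤ 1 ∧ dC F v < (2 - dC C v) * (q+1)) →
    ClientCanEnsure q
      (fun C : Finset (Sym2 (Fin n)) =>
        ∃ v : Fin n, ((clientGraph C).neighborSet v).ncard ≤ 1) F C := by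
  intro N
  induction N with
  | zero =>
    intro F C hFc hsafe
    obtain ⟨v, hv1, _⟩ := hsafe
    rw [ClientCanEnsure]
    rw [if_pos (by omega)]
    exact P_of_live hv1
  | succ N ih =>
    intro F C hFc hsafe
    obtain ⟨v, hv1, hv2⟩ := hsafe
    rw [ClientCanEnsure]
    split
    · exact P_of_live hv1
    · intro O hOF hOcard
      have hcard' : (F \ O).card ≤ N := by
        rw [Finset.card_sdiff_of_subset hOF]
        have := Finset.card_le_card hOF
        omega
      by_cases hall : ∀ x ∈ O, v ∈ x
      · have hOfull : dC O v = q + 1 := by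
          unfold dC
          rw [Finset.filter_true_of_mem hall, hOcard]
        have hOle : dC O v ≤ dC F v := dC_le hOF v
        have hd0 : dC C v = 0 := by
          rcases Nat.lt_or_ge (dC C v) 1 with h | h
          · omega
          · exfalso
            have h1 : dC C v = 1 := by omega
            rw [h1] at hv2
            omega
        have hOne : O.Nonempty := by rw [← Finset.card_pos]; omega
        obtain ⟨x, hxO⟩ := hOne
        refine ⟨x, hxO, ?_⟩
        apply ih _ _ hcard'
        refine ⟨v, ?_, ?_⟩
        · have := dC_insert_le x C v
          omega
        · have hge : 1 ≤ dC (insert x C) v := by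
            have hvx : v ∈ x := hall x hxO
            have hmem : x ∈ (insert x C).filter (fun e => v ∈ e) := by
              rw [Finset.mem_filter]
              exact ⟨Finset.mem_insert_self _ _, hvx⟩
            exact Finset.card_pos.mpr ⟨x, hmem⟩
          have hle := dC_insert_le x C v
          have hnew : dC (insert x C) v = 1 := by omega
          rw [hnew, dC_sdiff hOF, hOfull]
          rw [hd0] at hv2
          omega
      · push_neg at hall
        obtain ⟨x, hxO, hvx⟩ := hall
        refine ⟨x, hxO, ?_⟩
        apply ih _ _ hcard'
        refine ⟨v, ?_, ?_⟩
        · rw [dC_insert_not_mem hvx]; exact hv1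
        · rw [dC_insert_not_mem hvx]
          calc dC (F \ O) v ≤ dC F v := dC_le Finset.sdiff_subset v
            _ < (2 - dC C v) * (q+1) := hv2

/-- Main lemma: potential-based strategy. -/
lemma client_main (q : ℕ) : ∀ (N : ℕ) (F C : Finset (Sym2 (Fin n))), F.card ≤ N →
    F ⊆ knBoard n → C ⊆ knBoard n → (∀ y ∈ C, y ∉ F) →
    pot q F C ≤ -2*((q:ℤ)+1)^2 →
    ClientCanEnsure q
      (fun C : Finset (Sym2 (Fin n)) =>
        ∃ v : Fin n, ((clientGraph C).neighborSet v).ncard ≤ 1) F C := by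
  intro N
  induction N with
  | zero =>
    intro F C hFc hFb hCb hCF hpot
    rw [ClientCanEnsure, if_pos (by omega)]
    by_contra hP
    have hdead : ∀ v : Fin n, ¬ dC C v ≤ 1 := fun v hv => hP (P_of_live hv)
    have := pot_endgame (q := q) hFb hdead (by omega)
    linarith
  | succ N ih =>
    intro F C hFc hFb hCb hCF hpot
    by_cases hsafe : (∃ v, dC C v ≤ 1 ∧ dC F v < (2 - dC C v) * (q+1))
    · exact client_protect q _ F C hFc hsafe
    · rw [ClientCanEnsure]
      split
      · rename_i hsmall
        by_contra hP
        have hdead : ∀ v : Fin n, ¬ dC C v ≤ 1 := fun v hv => hP (P_of_live hv)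
        have := pot_endgame (q := q) hFb hdead (by omega)
        linarith
      · intro O hOF hOcard
        push_neg at hsafe
        have hrich : ∀ v : Fin n, dC C v ≤ 1 → (2 - dC C v) * (q+1) ≤ dC F v := hsafe
        obtain ⟨x, hxO, hpot'⟩ := pot_step hFb hCF hOF hOcard hrich
        refine ⟨x, hxO, ?_⟩
        apply ih
        · rw [Finset.card_sdiff_of_subset hOF]
          have := Finset.card_le_card hOF
          omega
        · exact fun y hy => hFb (Finset.mem_sdiff.mp hy).1
        · intro y hy
          rcases Finset.mem_insert.mp hy with rfl | hyC
          · exact hFb (hOF hxO)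
          · exact hCb hyC
        · intro y hy
          rcases Finset.mem_insert.mp hy with rfl | hyC
          · intro hcon
            exact (Finset.mem_sdiff.mp hcon).2 hxO
          · intro hcon
            exact hCF y hyC (Finset.mem_sdiff.mp hcon).1
        · linarith

lemma knBoard_card : (knBoard n).card = n.choose 2 := by
  have h := Sym2.card_subtype_not_diag (α := Fin n)
  rw [Fintype.card_subtype, Fintype.card_fin] at h
  rw [knBoard]
  exact h

lemma knBoard_card2 : 2 * (knBoard n).card = n * (n-1) := by
  rw [knBoard_card, Nat.choose_two_right]
  apply Nat.mul_div_cancel'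
  rcases n with _ | m
  · simp
  · have h : (m+1) * (m+1-1) = m * (m+1) := by
      have h1 : m+1-1 = m := rfl
      rw [h1, Nat.mul_comm]
    rw [h]
    exact (Nat.even_mul_succ_self m).two_dvd

lemma SG_stable : ∀ d : ℕ, SG q (q+1+d) = SG q (q+1) := by
  intro d
  induction d with
  | zero => rfl
  | succ d ihd =>
    have h : q+1+(d+1) = (q+1+d)+1 := by omega
    rw [h, SG_succ, ihd]
    have : max ((q:ℤ) + 1 - (q+1+d : ℕ)) 0 = 0 := by
      apply max_eq_right
      push_cast
      linarith
    rw [this, add_zero]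

lemma SG_total : 2 * SG q (q+1) = ((q:ℤ)+1) * ((q:ℤ)+2) := by
  have h1 : SG q (q+1) = ∑ j ∈ range (q+1), (((q:ℤ)+1) - (j:ℤ)) := by
    apply Finset.sum_congr rfl
    intro j hj
    rw [Finset.mem_range] at hj
    apply max_eq_left
    have : (j:ℤ) ≤ (q:ℤ) := by exact_mod_cast Nat.lt_succ_iff.mp hj
    linarith
  have h2 : ∑ j ∈ range (q+1), (((q:ℤ)+1) - (j:ℤ))
      = (q+1 : ℤ)*((q:ℤ)+1) - ∑ j ∈ range (q+1), (j:ℤ) := by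
    rw [Finset.sum_sub_distrib, Finset.sum_const, Finset.card_range]
    push_cast
    ring
  have h3 : (∑ j ∈ range (q+1), (j:ℤ)) * 2 = ((q:ℤ)+1) * (q:ℤ) := by
    have h := Finset.sum_range_id_mul_two (q+1)
    have : ((∑ j ∈ range (q+1), j : ℕ) : ℤ) * 2 = ((q+1) * (q+1-1) : ℕ) := by
      exact_mod_cast congrArg (Nat.cast : ℕ → ℤ) h
    push_cast at this
    simpa using this
  rw [h1, h2]
  linarith

lemma SG_full (h : q + 1 ≤ n) : 2 * SG q n = ((q:ℤ)+1) * ((q:ℤ)+2) := by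
  obtain ⟨d, rfl⟩ := Nat.exists_eq_add_of_le h
  rw [SG_stable d]
  exact SG_total

lemma dC_empty (v : Fin n) : dC (∅ : Finset (Sym2 (Fin n))) v = 0 := by
  simp [dC]

lemma pot_init (hn : 1000 ≤ n) (h49 : 49*n + 100 ≤ 100*(q+1)) (h2 : 2*(q+1) ≤ n) :
    pot q (knBoard n) (∅ : Finset (Sym2 (Fin n))) ≤ -2*((q:ℤ)+1)^2 := by
  have hNN : NN (∅ : Finset (Sym2 (Fin n))) = 2*(n:ℤ) := by
    unfold NN
    have hterm : ∀ v ∈ (univ : Finset (Fin n)),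
        ((2:ℤ) - (min (dC (∅:Finset (Sym2 (Fin n))) v) 2 : ℕ)) = 2 := by
      intro v _
      rw [dC_empty]
      simp
    rw [Finset.sum_congr rfl hterm, Finset.sum_const, Finset.card_univ, Fintype.card_fin]
    push_cast
    ring
  have hlive : (liveS (∅ : Finset (Sym2 (Fin n)))).card = n := by
    unfold liveS
    rw [Finset.filter_true_of_mem (fun v _ => by rw [dC_empty]; omega)]
    rw [Finset.card_univ, Fintype.card_fin]
  have hDD : DD (knBoard n) (∅ : Finset (Sym2 (Fin n))) = 0 := by
    unfold DD deadS
    rw [Finset.filter_false_of_mem (fun v _ => by rw [dC_empty]; omega)]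
    simp
  set Q : ℤ := (q:ℤ)+1 with hQ
  have hQpos : (0:ℤ) < Q := by rw [hQ]; positivity
  have hSG : 2 * SG q (liveS (∅ : Finset (Sym2 (Fin n)))).card = Q * (Q+1) := by
    rw [hlive, SG_full (by omega), hQ]
    ring
  set M : ℤ := ((knBoard n).card : ℤ) with hM
  have hM2 : 2*M = (n:ℤ)*((n:ℤ)-1) := by
    have h := knBoard_card2 (n := n)
    have : ((2 * (knBoard n).card : ℕ) : ℤ) = ((n * (n-1) : ℕ) : ℤ) := by rw [h]
    push_cast [Nat.cast_sub (by omega : 1 ≤ n)] at this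
    rw [hM]
    push_cast
    linarith
  have hdivle : ((((knBoard n).card / (q+1) : ℕ)) : ℤ) * Q ≤ M := by
    have h := Nat.div_mul_le_self (knBoard n).card (q+1)
    rw [hM, hQ]
    exact_mod_cast h
  have hkey : 8*Q*M + 2*M + 4*Q^2 ≤ 8*(n:ℤ)*Q^2 + Q^2*(Q+1) := by
    have hn' : (1000:ℤ) ≤ (n:ℤ) := by exact_mod_cast hn
    have h49' : 49*(n:ℤ) + 100 ≤ 100*Q := by rw [hQ]; exact_mod_cast h49
    have h2' : 2*Q ≤ (n:ℤ) := by rw [hQ]; exact_mod_cast h2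
    nlinarith [sq_nonneg ((n:ℤ) - 2*Q),
      mul_nonneg (by linarith : (0:ℤ) ≤ 100*Q - 49*(n:ℤ)) (sq_nonneg (n:ℤ)),
      sq_nonneg Q,
      mul_pos (by linarith : (0:ℤ) < (n:ℤ)) (by linarith : (0:ℤ) < Q),
      mul_nonneg (mul_nonneg (by linarith : (0:ℤ) ≤ 100*Q - 49*(n:ℤ)) (by linarith : (0:ℤ) ≤ (n:ℤ))) (by linarith : (0:ℤ) ≤ (n:ℤ)),
      mul_nonneg (mul_nonneg (by linarith : (0:ℤ) ≤ 100*Q - 49*(n:ℤ)) (by linarith : (0:ℤ) ≤ Q)) (by linarith : (0:ℤ) ≤ Q),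
      mul_nonneg (mul_nonneg (by linarith : (0:ℤ) ≤ 100*Q - 49*(n:ℤ)) (by linarith : (0:ℤ) ≤ (n:ℤ))) (by linarith : (0:ℤ) ≤ Q)]
  have hQSG : 2 * (Q * SG q ((liveS (∅ : Finset (Sym2 (Fin n)))).card)) = Q^2*(Q+1) := by
    calc 2 * (Q * SG q ((liveS (∅ : Finset (Sym2 (Fin n)))).card))
        = Q * (2 * SG q ((liveS (∅ : Finset (Sym2 (Fin n)))).card)) := by ring
      _ = Q * (Q*(Q+1)) := by rw [hSG]
      _ = Q^2*(Q+1) := by ring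
  unfold pot
  rw [hNN, hDD, ← hQ, ← hM]
  simp only [add_zero]
  have hdt : 4*Q^2 * ((((knBoard n).card / (q+1) : ℕ)) : ℤ) ≤ 4*Q*M := by
    have h1 : 4*Q*(((((knBoard n).card / (q+1) : ℕ)) : ℤ) * Q) ≤ 4*Q*M := by
      apply mul_le_mul_of_nonneg_left hdivle
      linarith
    calc 4*Q^2 * ((((knBoard n).card / (q+1) : ℕ)) : ℤ)
        = 4*Q*(((((knBoard n).card / (q+1) : ℕ)) : ℤ) * Q) := by ring
      _ ≤ 4*Q*M := h1
  linarith [hQSG, hkey, hdt]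

lemma client_trivial (q : ℕ) (hn : 1 ≤ n) (hq : n ≤ 2*q+1) :
    ∀ (N : ℕ) (F C : Finset (Sym2 (Fin n))), F.card ≤ N →
    F ⊆ knBoard n → C ⊆ knBoard n →
    (q+1) * C.card + F.card ≤ (knBoard n).card →
    ClientCanEnsure q
      (fun C : Finset (Sym2 (Fin n)) =>
        ∃ v : Fin n, ((clientGraph C).neighborSet v).ncard ≤ 1) F C := by
  have hbase : ∀ (C : Finset (Sym2 (Fin n))), C ⊆ knBoard n →
      (q+1) * C.card ≤ (knBoard n).card →
      ∃ v : Fin n, ((clientGraph C).neighborSet v).ncard ≤ 1 := by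
    intro C hCb hinv
    by_contra hP
    have hdead : ∀ v : Fin n, ¬ dC C v ≤ 1 := fun v hv => hP (P_of_live hv)
    have hsum : ∑ v : Fin n, dC C v = 2 * C.card := sum_dC_univ hCb
    have h2n : 2*n ≤ ∑ v : Fin n, dC C v := by
      calc 2*n = ∑ _v : Fin n, 2 := by
            rw [Finset.sum_const, Finset.card_univ, Fintype.card_fin]; ring
        _ ≤ ∑ v : Fin n, dC C v := by
            apply Finset.sum_le_sum
            intro v _
            have := hdead v
            omega
    have h1 : n ≤ C.card := by omega
    have h3 : (2*(q+1))*n ≤ (n-1)*n := by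
      calc (2*(q+1))*n = 2*((q+1)*n) := by ring
        _ ≤ 2*((q+1)*C.card) := by
            have := Nat.mul_le_mul_left (q+1) h1
            omega
        _ ≤ 2*(knBoard n).card := by omega
        _ = n*(n-1) := knBoard_card2
        _ = (n-1)*n := by ring
    have h4 : 2*(q+1) ≤ n - 1 := Nat.le_of_mul_le_mul_right h3 (by omega)
    omega
  intro N
  induction N with
  | zero =>
    intro F C hFc hFb hCb hinv
    rw [ClientCanEnsure, if_pos (by omega)]
    exact hbase C hCb (by omega)
  | succ N ih =>
    intro F C hFc hFb hCb hinv
    rw [ClientCanEnsure]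
    split
    · exact hbase C hCb (by omega)
    · rename_i hbig
      intro O hOF hOcard
      have hOne : O.Nonempty := by rw [← Finset.card_pos]; omega
      obtain ⟨x, hxO⟩ := hOne
      have hqF : q + 1 ≤ F.card := by
        have := Finset.card_le_card hOF; omega
      refine ⟨x, hxO, ?_⟩
      apply ih
      · rw [Finset.card_sdiff_of_subset hOF]
        omega
      · exact fun y hy => hFb (Finset.mem_sdiff.mp hy).1
      · intro y hy
        rcases Finset.mem_insert.mp hy with rfl | hyC
        · exact hFb (hOF hxO)
        · exact hCb hyC
      · have hc1 : (insert x C).card ≤ C.card + 1 := Finset.card_insert_le _ _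
        have hc2 : (F \ O).card = F.card - (q+1) := by rw [Finset.card_sdiff_of_subset hOF, hOcard]
        have : (q+1) * (insert x C).card ≤ (q+1) * (C.card + 1) :=
          Nat.mul_le_mul_left _ hc1
        have hexp : (q+1) * (C.card + 1) = (q+1) * C.card + (q+1) := by ring
        omega

end S4

/-- For all sufficiently large `n` and every integer `q ≥ 0.49 n`, in the
`(q : 1)` Waiter-Client game on `E(K_n)` Client has a strategy ensuring that at the end of
the game some vertex of his graph has degree at most `1`. -/
theorem statement4 :
    ∃ N : ℕ, ∀ n : ℕ, N ≤ n → ∀ q : ℕ, (0.49 : ℝ) * n ≤ (q : ℝ) →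
      ClientCanEnsure q
        (fun C : Finset (Sym2 (Fin n)) =>
          ∃ v : Fin n, ((clientGraph C).neighborSet v).ncard ≤ 1)
        (knBoard n) ∅ := by
  refine ⟨1000, ?_⟩
  intro n hn q hq
  have h49 : 49 * n ≤ 100 * q := by
    have h0 : (0.49 : ℝ) = 49/100 := by norm_num
    rw [h0] at hq
    have h1 : ((49 * n : ℕ) : ℝ) ≤ ((100 * q : ℕ) : ℝ) := by
      push_cast
      linarith
    exact_mod_cast h1
  by_cases hcase : n ≤ 2*q + 1
  · apply S4.client_trivial q (by omega) hcase (knBoard n).card (knBoard n) ∅ le_rfl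
      (le_refl _) (Finset.empty_subset _)
    simp
  · push_neg at hcase
    apply S4.client_main q (knBoard n).card (knBoard n) ∅ le_rfl (le_refl _)
      (Finset.empty_subset _) (by simp)
    exact S4.pot_init (by omega) (by omega) (by omega)
end

section
/- Let q be a positive integer, let X be a finite set, let I be a finite index set, and let (A_i)_{i∈I} be a family of (not necessarily distinct) subsets of X. Set Φ = Σ_{i∈I} (q+1)^{-|A_i|}. Then, playing the Waiter-Client game on X with bias q, Client has a strategy to ensure that at the end of the game the number of indices i ∈ I for which A_i is entirely contained in the set of elements claimed by Client is at most Φ. -/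
open SimpleGraph

section AuxWC

variable {α : Type*} [DecidableEq α]

/-- Weight of a single winning set in the potential function. -/
noncomputable def wcWt (q : ℕ) (A F C : Finset α) : ℝ :=
  if A ⊆ C ∪ F then ((q : ℝ) + 1) ^ (-((A \ C).card : ℤ)) else 0

lemma wcWt_nonneg (q : ℕ) (A F C : Finset α) : 0 ≤ wcWt q A F C := by
  unfold wcWt; split
  · positivity
  · exact le_refl _

lemma wcWt_eq_one {q : ℕ} {A C : Finset α} (F : Finset α) (h : A ⊆ C) :
    wcWt q A F C = 1 := by
  unfold wcWt
  rw [if_pos (h.trans Finset.subset_union_left),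
    Finset.sdiff_eq_empty_iff_subset.mpr h]
  simp

lemma sum_wcWt_le (q : ℕ) (A F C O : Finset α) (hO : O ⊆ F) (hOc : O.card = q + 1)
    (hCF : Disjoint C F) :
    ∑ x ∈ O, wcWt q A (F \ O) (insert x C) ≤ ((q : ℝ) + 1) * wcWt q A F C := by
  have hb : (0 : ℝ) < (q : ℝ) + 1 := by positivity
  -- elements of F are not in C
  have hFC : ∀ y ∈ F, y ∉ C := fun y hy hyC => (hCF.forall_ne_finset hyC hy) rfl
  by_cases hone : (A ∩ O).card ≥ 2
  · -- every term vanishes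
    have hz : ∀ x ∈ O, wcWt q A (F \ O) (insert x C) = 0 := by
      intro x hx
      obtain ⟨y, hy, hyx⟩ := Finset.exists_mem_ne (show 1 < (A ∩ O).card by omega) x
      have hyA : y ∈ A := (Finset.mem_inter.mp hy).1
      have hyO : y ∈ O := (Finset.mem_inter.mp hy).2
      unfold wcWt
      rw [if_neg]
      intro hsub
      have := hsub hyA
      simp only [Finset.mem_union, Finset.mem_insert, Finset.mem_sdiff] at this
      rcases this with (h | h) | h
      · exact hyx h
      · exact hFC y (hO hyO) h
      · exact h.2 hyO
    rw [Finset.sum_congr rfl hz, Finset.sum_const, smul_zero]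
    exact mul_nonneg hb.le (wcWt_nonneg _ _ _ _)
  · rcases Finset.eq_empty_or_nonempty (A ∩ O) with hs | ⟨x₀, hx₀⟩
    · -- no offered element is in A: every term equals the old weight
      have hz : ∀ x ∈ O, wcWt q A (F \ O) (insert x C) = wcWt q A F C := by
        intro x hx
        have hxA : x ∉ A := fun hxA =>
          (Finset.eq_empty_iff_forall_notMem.mp hs x) (Finset.mem_inter.mpr ⟨hxA, hx⟩)
        have hAO : ∀ a ∈ A, a ∉ O := fun a ha haO =>
          (Finset.eq_empty_iff_forall_notMem.mp hs a) (Finset.mem_inter.mpr ⟨ha, haO⟩)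
        unfold wcWt
        have hiff : (A ⊆ insert x C ∪ (F \ O)) ↔ (A ⊆ C ∪ F) := by
          constructor <;> intro h a ha <;> have := h ha <;>
            simp only [Finset.mem_union, Finset.mem_insert, Finset.mem_sdiff] at this ⊢
          · rcases this with (h' | h') | h'
            · exact absurd (h' ▸ ha) hxA
            · exact Or.inl h'
            · exact Or.inr h'.1
          · rcases this with h' | h'
            · exact Or.inl (Or.inr h')
            · exact Or.inr ⟨h', hAO a ha⟩
        have hsd : A \ insert x C = A \ C := by
          rw [Finset.sdiff_insert, Finset.erase_eq_of_notMem]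
          simp [hxA]
        rw [hsd]
        by_cases hc : A ⊆ C ∪ F
        · rw [if_pos (hiff.mpr hc), if_pos hc]
        · rw [if_neg (fun h => hc (hiff.mp h)), if_neg hc]
      rw [Finset.sum_congr rfl hz, Finset.sum_const, hOc, nsmul_eq_mul]
      push_cast
      exact le_refl _
    · -- exactly one offered element x₀ lies in A
      have hsing : A ∩ O = {x₀} := by
        apply Finset.eq_singleton_iff_unique_mem.mpr
        refine ⟨hx₀, fun y hy => ?_⟩
        by_contra hne
        have : 2 ≤ (A ∩ O).card := Finset.one_lt_card.mpr ⟨y, hy, x₀, hx₀, hne⟩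
        omega
      have hx₀A : x₀ ∈ A := (Finset.mem_inter.mp hx₀).1
      have hx₀O : x₀ ∈ O := (Finset.mem_inter.mp hx₀).2
      have hx₀C : x₀ ∉ C := hFC x₀ (hO hx₀O)
      -- all terms other than x₀ vanish
      have hz : ∀ x ∈ O, x ≠ x₀ → wcWt q A (F \ O) (insert x C) = 0 := by
        intro x hx hxne
        unfold wcWt
        rw [if_neg]
        intro hsub
        have := hsub hx₀A
        simp only [Finset.mem_union, Finset.mem_insert, Finset.mem_sdiff] at this
        rcases this with (h | h) | h
        · exact hxne h.symm
        · exact hx₀C h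
        · exact h.2 hx₀O
      rw [← Finset.add_sum_erase _ _ hx₀O,
        Finset.sum_congr rfl (fun x hx => hz x (Finset.mem_of_mem_erase hx)
          (Finset.ne_of_mem_erase hx)), Finset.sum_const, smul_zero, add_zero]
      by_cases hc : A ⊆ C ∪ F
      · have hsub : A ⊆ insert x₀ C ∪ (F \ O) := by
          intro a ha
          have := hc ha
          simp only [Finset.mem_union, Finset.mem_insert, Finset.mem_sdiff] at this ⊢
          by_cases hax : a = x₀
          · exact Or.inl (Or.inl hax)
          · have haO : a ∉ O := fun haO => hax (by
              have := hsing ▸ Finset.mem_inter.mpr ⟨ha, haO⟩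
              exact Finset.mem_singleton.mp this)
            rcases this with h' | h'
            · exact Or.inl (Or.inr h')
            · exact Or.inr ⟨h', haO⟩
        have hx₀AC : x₀ ∈ A \ C := Finset.mem_sdiff.mpr ⟨hx₀A, hx₀C⟩
        have hkpos : 1 ≤ (A \ C).card := Finset.card_pos.mpr ⟨x₀, hx₀AC⟩
        have hsd : A \ insert x₀ C = (A \ C).erase x₀ := Finset.sdiff_insert _ _ _
        have hcard : (A \ insert x₀ C).card = (A \ C).card - 1 := by
          rw [hsd, Finset.card_erase_of_mem hx₀AC]
        unfold wcWt
        rw [if_pos hsub, if_pos hc, hcard]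
        have : (-(((A \ C).card - 1 : ℕ) : ℤ)) = 1 + (-((A \ C).card : ℤ)) := by
          push_cast [hkpos]; ring
        rw [this, zpow_add₀ (ne_of_gt hb), zpow_one]
      · have hnsub : ¬ A ⊆ insert x₀ C ∪ (F \ O) := by
          intro h
          apply hc
          intro a ha
          have := h ha
          simp only [Finset.mem_union, Finset.mem_insert, Finset.mem_sdiff] at this ⊢
          rcases this with (h' | h') | h'
          · exact Or.inr (h' ▸ hO hx₀O)
          · exact Or.inl h'
          · exact Or.inr h'.1
        unfold wcWt
        rw [if_neg hnsub, if_neg hc, mul_zero]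

end AuxWC

section MainWC

variable {α : Type*} [DecidableEq α]

lemma client_potential {I : Type*} [Fintype I] (q : ℕ) (A : I → Finset α) (r : ℝ)
    (F : Finset α) :
    ∀ C : Finset α, Disjoint C F → (∑ i : I, wcWt q (A i) F C) ≤ r →
      ClientCanEnsure q
        (fun C' : Finset α =>
          (((Finset.univ.filter fun i : I => A i ⊆ C').card : ℝ) ≤ r)) F C := by
  induction F using Finset.strongInduction with
  | _ F ih =>
    intro C hCF hΦ
    rw [ClientCanEnsure]
    split
    · -- endgame: count the fully claimed sets
      calc (((Finset.univ.filter fun i : I => A i ⊆ C).card : ℝ))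
          = ∑ i ∈ Finset.univ.filter fun i : I => A i ⊆ C, wcWt q (A i) F C := by
            rw [Finset.sum_congr rfl
              (fun i hi => wcWt_eq_one F (Finset.mem_filter.mp hi).2)]
            simp
        _ ≤ ∑ i : I, wcWt q (A i) F C :=
            Finset.sum_le_sum_of_subset_of_nonneg (Finset.filter_subset _ _)
              (fun i _ _ => wcWt_nonneg _ _ _ _)
        _ ≤ r := hΦ
    · intro O hO hOc
      have hOne : O.Nonempty := by
        rw [← Finset.card_pos]; omega
      have hkey : ∑ x ∈ O, ∑ i : I, wcWt q (A i) (F \ O) (insert x C) ≤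
          ∑ x ∈ O, ∑ i : I, wcWt q (A i) F C := by
        rw [Finset.sum_comm]
        calc ∑ i : I, ∑ x ∈ O, wcWt q (A i) (F \ O) (insert x C)
            ≤ ∑ i : I, ((q : ℝ) + 1) * wcWt q (A i) F C :=
              Finset.sum_le_sum (fun i _ => sum_wcWt_le q (A i) F C O hO hOc hCF)
          _ = ∑ x ∈ O, ∑ i : I, wcWt q (A i) F C := by
              rw [← Finset.mul_sum, Finset.sum_const, hOc, nsmul_eq_mul]
              push_cast; ring
      obtain ⟨x, hx, hxle⟩ := Finset.exists_le_of_sum_le hOne hkey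
      refine ⟨x, hx, ih (F \ O) (Finset.sdiff_ssubset hO hOne) (insert x C) ?_
        (hxle.trans hΦ)⟩
      rw [Finset.disjoint_left]
      intro a ha haF
      simp only [Finset.mem_insert] at ha
      rcases ha with rfl | ha
      · exact (Finset.mem_sdiff.mp haF).2 hx
      · exact (hCF.forall_ne_finset ha (Finset.mem_sdiff.mp haF).1) rfl

end MainWC

/-- Erdős–Selfridge type criterion, implicit in Beck's work.
If `Φ = ∑ i, (q+1)^{-|A i|}`, then in the Waiter-Client game with bias `q` played on the
finite board `X`, Client has a strategy ensuring that the number of indices `i` with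
`A i ⊆ C` (where `C` is his final set) is at most `Φ`. -/
theorem statement5 {α : Type*} [DecidableEq α] {I : Type*} [Fintype I] [DecidableEq I]
    (q : ℕ) (hq : 0 < q) (X : Finset α) (A : I → Finset α) (hA : ∀ i, A i ⊆ X) :
    ClientCanEnsure q
      (fun C : Finset α =>
        (((Finset.univ.filter fun i : I => A i ⊆ C).card : ℝ) ≤
          ∑ i : I, ((q : ℝ) + 1) ^ (-((A i).card : ℤ))))
      X ∅ := by
  have h0 : (∑ i : I, wcWt q (A i) X ∅) = ∑ i : I, ((q : ℝ) + 1) ^ (-((A i).card : ℤ)) := by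
    refine Finset.sum_congr rfl fun i _ => ?_
    unfold wcWt
    rw [if_pos (by simpa using hA i)]
    simp
  have := client_potential (q := q) A (∑ i : I, ((q : ℝ) + 1) ^ (-((A i).card : ℤ))) X ∅
    (Finset.disjoint_empty_left X) (le_of_eq h0)
  exact this
end

section
/- Let n be a positive integer and let η be an integer with 10·n^{3/4} ≤ η ≤ n−1, and set q = n − η. Then in the (q:1) Waiter-Client game on E(K_n) Waiter has a strategy to ensure that at the end of the game Client's graph contains a cycle of length at least η/6. -/
open SimpleGraph

theorem waiterCanForce_of_inv {α : Type*} [DecidableEq α] (q : ℕ) (P : Finset α → Prop)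
    (I : Finset α → Finset α → Prop)
    (step : ∀ F C, I F C → (F.card < q + 1 → P C) ∧
      (q + 1 ≤ F.card → ∃ O ⊆ F, O.card = q + 1 ∧ ∀ x ∈ O, I (F \ O) (insert x C))) :
    ∀ F C, I F C → WaiterCanForce q P F C := by
  have key : ∀ N F C, F.card ≤ N → I F C → WaiterCanForce q P F C := by
    intro N
    induction N with
    | zero =>
      intro F C hc hI
      rw [WaiterCanForce]
      have h1 : F.card < q + 1 := by omega
      simp only [h1, if_true]
      exact (step F C hI).1 h1
    | succ N ih =>
      intro F C hc hI
      rw [WaiterCanForce]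
      by_cases h1 : F.card < q + 1
      · simp only [h1, if_true]
        exact (step F C hI).1 h1
      · simp only [h1, if_false]
        obtain ⟨O, hOF, hOcard, hO⟩ := (step F C hI).2 (by omega)
        refine ⟨O, hOF, hOcard, fun x hx _ => ?_⟩
        have hsd : (F \ O).card = F.card - O.card := Finset.card_sdiff_of_subset hOF
        exact ih _ _ (by omega) (hO x hx)
  exact fun F C hI => key F.card F C le_rfl hI

variable {V : Type*} {G : SimpleGraph V}

/-- A walk along `f a, f (a+1), ..., f (a+d)`. -/
noncomputable def chainWalk (f : ℕ → V) (a : ℕ) :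
    ∀ d : ℕ, (∀ t, t < d → G.Adj (f (a + t)) (f (a + t + 1))) → G.Walk (f a) (f (a + d))
  | 0, _ => Walk.nil
  | (d+1), h =>
    Walk.concat (chainWalk f a d (fun t ht => h t (by omega)))
      (by have := h d (by omega); exact this)

theorem chainWalk_support (f : ℕ → V) (a : ℕ) (d : ℕ)
    (h : ∀ t, t < d → G.Adj (f (a + t)) (f (a + t + 1))) :
    (chainWalk f a d h).support = (List.range (d+1)).map (fun t => f (a + t)) := by
  induction d with
  | zero => simp [chainWalk, List.range_succ]
  | succ d ih =>
    rw [chainWalk, Walk.support_concat, ih]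
    rw [List.range_succ (n := d + 1)]
    simp [List.concat_eq_append]

theorem chainWalk_edges (f : ℕ → V) (a : ℕ) (d : ℕ)
    (h : ∀ t, t < d → G.Adj (f (a + t)) (f (a + t + 1))) :
    (chainWalk f a d h).edges = (List.range d).map (fun t => s(f (a + t), f (a + t + 1))) := by
  induction d with
  | zero => simp [chainWalk]
  | succ d ih =>
    rw [chainWalk, Walk.edges_concat, ih, List.range_succ]
    simp [List.concat_eq_append, show a + (d+1) = a + d + 1 from by omega]

theorem chainWalk_length (f : ℕ → V) (a : ℕ) (d : ℕ)
    (h : ∀ t, t < d → G.Adj (f (a + t)) (f (a + t + 1))) :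
    (chainWalk f a d h).length = d := by
  induction d with
  | zero => simp [chainWalk]
  | succ d ih => rw [chainWalk, Walk.length_concat, ih]

theorem exists_cycle_of_chain (f : ℕ → V) (i j : ℕ) (hij : i + 2 ≤ j)
    (hinj : ∀ a b, a ≤ j → b ≤ j → f a = f b → a = b)
    (hadj : ∀ t, i ≤ t → t < j → G.Adj (f t) (f (t + 1)))
    (hchord : G.Adj (f j) (f i)) :
    ∃ (v : V) (w : G.Walk v v), w.IsCycle ∧ w.length = j - i + 1 := by
  set d := j - i with hd
  have hadj' : ∀ t, t < d → G.Adj (f (i + t)) (f (i + t + 1)) := by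
    intro t ht; exact hadj (i + t) (by omega) (by omega)
  have hji : i + d = j := by omega
  let p : G.Walk (f i) (f (i + d)) := chainWalk f i d hadj'
  have hchord' : G.Adj (f (i + d)) (f i) := by rw [hji]; exact hchord
  refine ⟨f (i + d), Walk.cons hchord' p, ?_, ?_⟩
  · rw [Walk.cons_isCycle_iff]
    constructor
    · apply Walk.IsPath.mk'
      rw [chainWalk_support]
      apply List.Nodup.map_on
      · intro a ha b hb hfab
        simp only [List.mem_range] at ha hb
        have := hinj (i + a) (i + b) (by omega) (by omega) hfab
        omega
      · exact List.nodup_range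
    · rw [chainWalk_edges]
      intro hmem
      simp only [List.mem_map, List.mem_range] at hmem
      obtain ⟨t, ht, heq⟩ := hmem
      rw [Sym2.eq_iff] at heq
      rcases heq with ⟨h1, h2⟩ | ⟨h1, h2⟩
      · have := hinj (i + d) (i + t) (by omega) (by omega) h1.symm
        omega
      · have e1 := hinj (i + d) (i + t + 1) (by omega) (by omega) h2.symm
        have e2 := hinj i (i + t) (by omega) (by omega) h1.symm
        omega
  · show p.length + 1 = d + 1
    rw [show p.length = d from chainWalk_length f i d hadj']

namespace WCG

/-- Enlistment schedule: `lo Q w t = ⌈Q*(t+1)/w⌉`. -/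
def lo (Q w t : ℕ) : ℕ := (Q * (t + 1) + (w - 1)) / w

theorem lo_mono (Q w : ℕ) {t t' : ℕ} (h : t ≤ t') : lo Q w t ≤ lo Q w t' :=
  Nat.div_le_div_right (by nlinarith)

theorem lo_add_w (Q w : ℕ) (hw : 0 < w) (t : ℕ) : lo Q w (t + w) = lo Q w t + Q := by
  unfold lo
  rw [show Q * (t + w + 1) + (w - 1) = Q * (t + 1) + (w - 1) + Q * w by ring]
  rw [Nat.add_mul_div_right _ _ hw]

theorem lo_lip (Q w : ℕ) (hw : 0 < w) (t c : ℕ) :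
    lo Q w (t + c) ≤ lo Q w t + (Q * c) / w + 1 := by
  unfold lo
  have h1 := Nat.div_add_mod (Q * (t + 1) + (w - 1)) w
  have h2 := Nat.div_add_mod (Q * c) w
  have h3 : (Q * (t + 1) + (w - 1)) % w < w := Nat.mod_lt _ hw
  have h4 : (Q * c) % w < w := Nat.mod_lt _ hw
  have h5 : Q * (t + c + 1) + (w - 1) = (Q * (t + 1) + (w - 1)) + Q * c := by ring
  rw [h5]
  have h6 : Q * (t + 1) + (w - 1) + Q * c
      < ((Q * (t + 1) + (w - 1)) / w + Q * c / w + 2) * w := by nlinarith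
  have h7 := (Nat.div_lt_iff_lt_mul hw).mpr h6
  omega

theorem gap_of_lo_gt (Q w G g : ℕ) (hw : 0 < w) (hQ : 0 < Q) (hg : g = G * w / Q)
    {t t' : ℕ} (h : t ≤ t') (hgap : lo Q w t + G < lo Q w t') : g ≤ t' - t := by
  have hlip := lo_lip Q w hw t (t' - t)
  rw [show t + (t' - t) = t' by omega] at hlip
  have h1 : G ≤ Q * (t' - t) / w := by omega
  have h2 : G * w ≤ Q * (t' - t) := (Nat.le_div_iff_mul_le hw).mp h1
  have h3 : (G * w) / Q ≤ (Q * (t' - t)) / Q := Nat.div_le_div_right h2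
  rw [Nat.mul_div_cancel_left _ hQ] at h3
  omega


theorem mod_eq_lt_imp (D a b : ℕ) (h : a % D = b % D) (hab : a < b) : a + D ≤ b := by
  have hD : 0 < D := by
    rcases Nat.eq_zero_or_pos D with h0 | h0
    · subst h0; simp at h; omega
    · exact h0
  have ha := Nat.div_add_mod a D
  have hb := Nat.div_add_mod b D
  have hdivle : a / D ≤ b / D := Nat.div_le_div_right (le_of_lt hab)
  rcases Nat.eq_or_lt_of_le hdivle with he | hlt
  · rw [he] at ha; omega
  · have h1 : a / D + 1 ≤ b / D := hlt
    have hm : D * (a / D + 1) ≤ D * (b / D) := Nat.mul_le_mul_left D h1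
    have hd : D * (a / D + 1) = D * (a / D) + D := by ring
    omega

open Finset in
/-- The key counting lemma: among rounds `0..m`, there are at least `min (m+1-w) (g-1)`
rounds whose service window misses the residue class `ρ` mod `D`. -/
theorem count_free (Q w D m G g ρ : ℕ) (hw : 0 < w) (hQ : 0 < Q) (hQD : Q ≤ D)
    (hGD : D = Q + G) (hg : g = G * w / Q) :
    ∃ S ⊆ Finset.range (m + 1), min (m + 1 - w) (g - 1) ≤ S.card ∧
      ∀ i ∈ S, ∀ u, lo Q w i ≤ u → u < lo Q w i + Q → u % D ≠ ρ := by
  classical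
  set P : ℕ → Prop := fun i => ∃ u, lo Q w i ≤ u ∧ u < lo Q w i + Q ∧ u % D = ρ with hP
  set bad : Finset ℕ := (Finset.range (m + 1)).filter P with hbad
  have hD : 0 < D := by omega
  set u : ℕ → ℕ := fun i => if h : P i then Classical.choose h else 0 with hu
  have hu1 : ∀ i, P i → lo Q w i ≤ u i ∧ u i < lo Q w i + Q ∧ u i % D = ρ := by
    intro i hi
    simp only [hu, dif_pos hi]
    exact Classical.choose_spec hi
  have tri : ∀ i i', i ≤ i' → P i → P i' → u i' = u i ∨ u i + D ≤ u i' := by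
    intro i i' hle hi hi'
    obtain ⟨a1, a2, a3⟩ := hu1 i hi
    obtain ⟨b1, b2, b3⟩ := hu1 i' hi'
    have hmono := lo_mono Q w hle
    have hmod : u i % D = u i' % D := by omega
    rcases Nat.lt_trichotomy (u i') (u i) with hc | hc | hc
    · exfalso
      have := mod_eq_lt_imp D (u i') (u i) hmod.symm hc
      omega
    · exact Or.inl hc
    · exact Or.inr (mod_eq_lt_imp D (u i) (u i') hmod hc)
  have diam : ∀ i i', i ≤ i' → P i → P i' → u i' = u i → i' - i < w := by
    intro i i' hle hi hi' hequ
    by_contra hcon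
    have h1 : i + w ≤ i' := by omega
    have h2 := lo_mono Q w h1
    rw [lo_add_w Q w hw] at h2
    obtain ⟨a1, a2, a3⟩ := hu1 i hi
    obtain ⟨b1, b2, b3⟩ := hu1 i' hi'
    omega
  by_cases hB : ∃ i' ∈ bad, ∃ i ∈ bad, i < i' ∧ u i + D ≤ u i'
  · -- Case B : two service passes; find the gap below the first round of the later pass.
    set Bset : Finset ℕ := bad.filter (fun i' => ∃ i ∈ bad, i < i' ∧ u i + D ≤ u i') with hBs
    have hBne : Bset.Nonempty := by
      obtain ⟨i', hi', hw'⟩ := hB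
      exact ⟨i', by simp [hBs, hi', hw']⟩
    set istar : ℕ := Bset.min' hBne with histar
    have histar_mem : istar ∈ Bset := Finset.min'_mem _ _
    obtain ⟨histar_bad, a, ha_bad, ha_lt, ha_u⟩ := by
      simpa [hBs, Finset.mem_filter] using histar_mem
    have histar_P : P istar := (Finset.mem_filter.mp histar_bad).2
    have histar_le : istar ≤ m := by
      have := (Finset.mem_filter.mp histar_bad).1
      simp only [Finset.mem_range] at this; omega
    have key : ∀ i ∈ bad, i < istar → u i + D ≤ u istar := by
      intro i hi hlt
      have hiP : P i := (Finset.mem_filter.mp hi).2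
      rcases tri i istar (by omega) hiP histar_P with heq | hle2
      · exfalso
        have haP : P a := (Finset.mem_filter.mp ha_bad).2
        have halti : a < i := by
          by_contra hcon
          have hia : i ≤ a := by omega
          rcases tri i a hia hiP haP with h1 | h1 <;> omega
        have hmem2 : i ∈ Bset :=
          Finset.mem_filter.mpr ⟨hi, a, ha_bad, halti, by omega⟩
        have := Finset.min'_le _ _ hmem2
        omega
      · exact hle2
    have hgap : ∀ i ∈ bad, i < istar → g ≤ istar - i := by
      intro i hi hlt
      have hiP : P i := (Finset.mem_filter.mp hi).2
      obtain ⟨a1, a2, a3⟩ := hu1 i hiP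
      obtain ⟨b1, b2, b3⟩ := hu1 istar histar_P
      have hui := key i hi hlt
      have hlogap : lo Q w i + G < lo Q w istar := by omega
      exact gap_of_lo_gt Q w G g hw hQ hg (by omega) hlogap
    have histar_ge : g ≤ istar := by
      have := hgap a ha_bad ha_lt
      omega
    refine ⟨Finset.Ico (istar - g + 1) istar, ?_, ?_, ?_⟩
    · intro x hx
      simp only [Finset.mem_Ico] at hx
      simp only [Finset.mem_range]
      omega
    · rw [Nat.card_Ico]
      omega
    · intro i hi uu huu1 huu2 huu3
      simp only [Finset.mem_Ico] at hi
      have hiP : P i := ⟨uu, huu1, huu2, huu3⟩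
      have hibad : i ∈ bad := by
        refine Finset.mem_filter.mpr ⟨?_, hiP⟩
        simp only [Finset.mem_range]; omega
      have := hgap i hibad (by omega)
      omega
  · -- Case A : single service pass; bad has diameter < w.
    refine ⟨Finset.range (m + 1) \ bad, Finset.sdiff_subset, ?_, ?_⟩
    · have hcard : bad.card ≤ w := by
        rcases Finset.eq_empty_or_nonempty bad with he | hne
        · rw [he]; simp
        · set b0 : ℕ := bad.min' hne with hb0
          have hb0mem := Finset.min'_mem bad hne
          have hsub : bad ⊆ Finset.Icc b0 (b0 + (w - 1)) := by
            intro i hi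
            have h1 := Finset.min'_le bad i hi
            have hiP : P i := (Finset.mem_filter.mp hi).2
            have hb0P : P b0 := (Finset.mem_filter.mp hb0mem).2
            rcases tri b0 i h1 hb0P hiP with h2 | h2
            · have := diam b0 i h1 hb0P hiP h2
              simp only [Finset.mem_Icc]; omega
            · exfalso
              have hlt : b0 < i := by
                rcases Nat.eq_or_lt_of_le h1 with h3 | h3
                · exfalso
                  have hbi : b0 = i := h3
                  rw [hbi] at h2; omega
                · exact h3
              exact hB ⟨i, hi, b0, hb0mem, hlt, h2⟩
          calc bad.card ≤ (Finset.Icc b0 (b0 + (w - 1))).card := Finset.card_le_card hsub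
            _ = w := by rw [Nat.card_Icc]; omega
      have hsd : (Finset.range (m + 1) \ bad).card = (Finset.range (m+1)).card - bad.card :=
        Finset.card_sdiff_of_subset (Finset.filter_subset _ _)
      rw [hsd, Finset.card_range]
      omega
    · intro i hi uu huu1 huu2 huu3
      simp only [Finset.mem_sdiff, Finset.mem_range] at hi
      exact hi.2 (Finset.mem_filter.mpr ⟨by simp only [Finset.mem_range]; omega,
        uu, huu1, huu2, huu3⟩)

def wpar (η : ℕ) : ℕ := η / 6 + 1
def Mpar (n : ℕ) : ℕ := Nat.sqrt n + 1
def kpar (n η : ℕ) : ℕ := 3 * wpar η + Mpar n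
def mpar (η : ℕ) : ℕ := 2 * wpar η
def Qpar (n η : ℕ) : ℕ := (n - η) + kpar n η + 2
def Gpar (n η : ℕ) : ℕ := (n - 1) - Qpar n η
def gpar (n η : ℕ) : ℕ := Gpar n η * wpar η / Qpar n η

structure Pack (n η : ℕ) : Prop where
  hn : 9801 ≤ n
  hη : 9800 ≤ η
  hηn : η + 1 ≤ n
  hw6 : η + 1 ≤ 6 * wpar η
  hkη : kpar n η + 3 ≤ η
  hQG : Qpar n η + Gpar n η = n - 1
  hGval : Gpar n η = η - (kpar n η + 3)
  hQn : Qpar n η ≤ n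
  hgs : 6 * Nat.sqrt n ≤ gpar n η
  hMmin : (n - η) + 1 ≤ Mpar n * min (mpar η + 1 - wpar η) (gpar n η - 1)
  hboard : (kpar n η + 2) * ((n - η) + 1) ≤ n * (n - 1) / 2

theorem board_aux (η a : ℕ) (h3 : 3 ≤ η) (h1 : 1 ≤ a) :
    η * (a + 1) * 2 ≤ (η + a) * (η + a - 1) := by
  obtain ⟨b, rfl⟩ : ∃ b, a = b + 1 := ⟨a - 1, by omega⟩
  have h : (η + (b + 1)) * (η + (b + 1) - 1) = (η + b + 1) * (η + b) := by
    congr 1 <;> omega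
  rw [h]
  nlinarith

theorem pack_of (n η : ℕ) (h4 : 10000 * n ^ 3 ≤ η ^ 4) (hηn : η + 1 ≤ n) : Pack n η := by
  set s := Nat.sqrt n with hs
  have hn0 : 0 < n := by omega
  have hs2 : s * s ≤ n := Nat.sqrt_le n
  have hs3 : n < (s + 1) * (s + 1) := Nat.lt_succ_sqrt n
  have hs3' : n ≤ s * s + 2 * s := by nlinarith
  -- η² ≥ 100 n s
  have hη2 : 100 * (n * s) ≤ η ^ 2 := by
    by_contra hcon
    push_neg at hcon
    have h1 : η ^ 2 * η ^ 2 < (100 * (n * s)) * (100 * (n * s)) :=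
      Nat.mul_lt_mul_of_lt_of_le hcon (le_of_lt hcon) (by omega)
    have h2 : (100 * (n * s)) * (100 * (n * s)) = 10000 * (n * n * (s * s)) := by ring
    have h3 : n * n * (s * s) ≤ n * n * n := Nat.mul_le_mul_left _ hs2
    have h4' : η ^ 2 * η ^ 2 = η ^ 4 := by ring
    have h5 : 10000 * (n * n * n) = 10000 * n ^ 3 := by ring
    omega
  -- η ≥ 100 s
  have hη100 : 100 * s ≤ η := by
    have h1 : η * η ≤ n * η := Nat.mul_le_mul_right _ (by omega)
    have h2 : η ^ 2 = η * η := by ring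
    have h4' : n * (100 * s) ≤ n * η := by
      calc n * (100 * s) = 100 * (n * s) := by ring
        _ ≤ η ^ 2 := hη2
        _ ≤ n * η := by omega
    exact Nat.le_of_mul_le_mul_left h4' hn0
  have hs1 : 1 ≤ s := by
    rcases Nat.eq_zero_or_pos s with h0 | h0
    · rw [h0] at hs3'; omega
    · exact h0
  have hs98 : 98 ≤ s := by
    by_contra hcon
    push_neg at hcon
    have h1 : s * s ≤ 97 * s := Nat.mul_le_mul_right _ (by omega)
    omega
  have hη9800 : 9800 ≤ η := by omega
  have hn9801 : 9801 ≤ n := by omega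
  -- w facts
  have hd6 := Nat.div_add_mod η 6
  have hmod6 : η % 6 < 6 := Nat.mod_lt _ (by norm_num)
  set d := η / 6 with hd
  have hw : wpar η = d + 1 := rfl
  have hw6 : η + 1 ≤ 6 * wpar η := by rw [hw]; omega
  have hM : Mpar n = s + 1 := rfl
  have hk : kpar n η = 3 * (d + 1) + (s + 1) := rfl
  have hkη : kpar n η + 3 ≤ η := by rw [hk]; omega
  have hQval : Qpar n η = (n - η) + kpar n η + 2 := rfl
  have hQG : Qpar n η + Gpar n η = n - 1 := by
    have : Qpar n η ≤ n - 1 := by rw [hQval]; omega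
    unfold Gpar; omega
  have hGval : Gpar n η = η - (kpar n η + 3) := by
    unfold Gpar; rw [hQval]; omega
  have hQn : Qpar n η ≤ n := by rw [hQval]; omega
  have hQpos : 0 < Qpar n η := by rw [hQval]; omega
  have h2G : 2 * η ≤ 5 * Gpar n η := by rw [hGval, hk]; omega
  -- G*w ≥ 6 n s  (via 30 Gw ≥ 2η² ≥ 200 n s)
  have hGw : 6 * (n * s) ≤ Gpar n η * wpar η := by
    have h1 : (2 * η) * (η + 1) ≤ (5 * Gpar n η) * (6 * wpar η) :=
      Nat.mul_le_mul h2G hw6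
    have h2 : (5 * Gpar n η) * (6 * wpar η) = 30 * (Gpar n η * wpar η) := by ring
    have h3 : 2 * (η * η) ≤ (2 * η) * (η + 1) := by ring_nf; omega
    have h4' : η ^ 2 = η * η := by ring
    omega
  have hgs : 6 * s ≤ gpar n η := by
    unfold gpar
    rw [Nat.le_div_iff_mul_le hQpos]
    calc 6 * s * Qpar n η ≤ 6 * s * n := Nat.mul_le_mul_left _ hQn
      _ = 6 * (n * s) := by ring
      _ ≤ Gpar n η * wpar η := hGw
  have hmw : mpar η + 1 - wpar η = wpar η + 1 := by
    unfold mpar; omega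
  have hMmin : (n - η) + 1 ≤ Mpar n * min (mpar η + 1 - wpar η) (gpar n η - 1) := by
    rw [hmw, hM]
    have hss : s ≤ s * s := Nat.le_mul_of_pos_left s hs1
    have hA : 6 * n ≤ 6 * ((s + 1) * (wpar η + 1)) := by
      have h1 : s * (η + 1) ≤ s * (6 * wpar η) := Nat.mul_le_mul_left _ hw6
      have h1' : s * (6 * wpar η) = 6 * (s * wpar η) := by ring
      have h2 : 100 * (s * s) ≤ s * η := by
        calc 100 * (s * s) = (100 * s) * s := by ring
          _ ≤ η * s := Nat.mul_le_mul_right _ hη100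
          _ = s * η := by ring
      have h3 : s * (η + 1) = s * η + s := by ring
      have h4' : (s + 1) * (wpar η + 1) = s * wpar η + s + wpar η + 1 := by ring
      omega
    have hB : n ≤ (s + 1) * (gpar n η - 1) := by
      have h1 : (s + 1) * (5 * s) ≤ (s + 1) * (gpar n η - 1) :=
        Nat.mul_le_mul_left _ (by omega)
      have h2 : (s + 1) * (5 * s) = 5 * (s * s) + 5 * s := by ring
      omega
    rcases le_total (wpar η + 1) (gpar n η - 1) with h | h
    · rw [min_eq_left h]
      have := Nat.mul_le_mul_left 6 (Nat.mul_le_mul_left (s+1) h)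
      omega
    · rw [min_eq_right h]; omega
  have hboard : (kpar n η + 2) * ((n - η) + 1) ≤ n * (n - 1) / 2 := by
    rw [Nat.le_div_iff_mul_le (by norm_num : 0 < 2)]
    have h1 : kpar n η + 2 ≤ η := by omega
    have h2 : (kpar n η + 2) * ((n - η) + 1) * 2 ≤ η * ((n - η) + 1) * 2 :=
      Nat.mul_le_mul_right _ (Nat.mul_le_mul_right _ h1)
    refine le_trans h2 ?_
    have h3 := board_aux η (n - η) (by omega) (by omega)
    have h4' : η + (n - η) = n := by omega
    rw [h4'] at h3
    exact h3
  exact ⟨hn9801, hη9800, hηn, hw6, hkη, hQG, hGval, hQn, hgs, hMmin, hboard⟩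

def vtx (n : ℕ) (hn : 0 < n) (u : ℕ) : Fin n := ⟨(1 + u % (n - 1)) % n, Nat.mod_lt _ hn⟩

def Aset (n η i : ℕ) : Finset ℕ :=
  Finset.Ico (lo (Qpar n η) (wpar η) i) (lo (Qpar n η) (wpar η) i + Qpar n η)

def Tset (n η : ℕ) (hn : 0 < n) (i : ℕ) : Finset (Fin n) := (Aset n η i).image (vtx n hn)

section VtxLemmas

variable {n : ℕ} (hn : 0 < n) (hn2 : 2 ≤ n)
include hn2

theorem vtx_val (u : ℕ) : (vtx n hn u).val = 1 + u % (n - 1) := by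
  have h1 : u % (n - 1) < n - 1 := Nat.mod_lt _ (by omega)
  simp only [vtx]
  apply Nat.mod_eq_of_lt
  revert h1
  generalize u % (n - 1) = z
  intro h1
  omega

theorem vtx_val_pos (u : ℕ) : 1 ≤ (vtx n hn u).val := by rw [vtx_val hn hn2]; omega

theorem vtx_eq_iff (u u' : ℕ) : vtx n hn u = vtx n hn u' ↔ u % (n - 1) = u' % (n - 1) := by
  constructor
  · intro h
    have := congrArg Fin.val h
    rw [vtx_val hn hn2, vtx_val hn hn2] at this
    omega
  · intro h
    apply Fin.ext
    rw [vtx_val hn hn2, vtx_val hn hn2, h]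

omit hn2 in
theorem mem_Tset_iff {v : Fin n} {η i : ℕ} :
    v ∈ Tset n η hn i ↔ ∃ u, lo (Qpar n η) (wpar η) i ≤ u ∧
      u < lo (Qpar n η) (wpar η) i + Qpar n η ∧ vtx n hn u = v := by
  simp only [Tset, Finset.mem_image, Aset, Finset.mem_Ico]
  constructor
  · rintro ⟨u, ⟨h1, h2⟩, h3⟩; exact ⟨u, h1, h2, h3⟩
  · rintro ⟨u, h1, h2, h3⟩; exact ⟨u, ⟨h1, h2⟩, h3⟩

theorem zero_not_mem_Tset {η i : ℕ} : (⟨0, hn⟩ : Fin n) ∉ Tset n η hn i := by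
  rw [mem_Tset_iff hn]
  rintro ⟨u, _, _, h3⟩
  have := vtx_val_pos hn hn2 u
  rw [h3] at this
  simp at this

theorem Tset_card {η i : ℕ} (hQD : Qpar n η ≤ n - 1) :
    (Tset n η hn i).card = Qpar n η := by
  rw [Tset, Finset.card_image_of_injOn, Aset, Nat.card_Ico]
  · omega
  · intro u hu u' hu' heq
    simp only [Aset, Finset.mem_coe, Finset.mem_Ico] at hu hu'
    rw [vtx_eq_iff hn hn2] at heq
    by_contra hne
    rcases Nat.lt_or_ge u u' with h | h
    · have := mod_eq_lt_imp (n - 1) u u' heq h; omega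
    · have hlt : u' < u := by omega
      have := mod_eq_lt_imp (n - 1) u' u heq.symm hlt; omega

end VtxLemmas

/-- The winning property. -/
def Won (n η : ℕ) (C : Finset (Sym2 (Fin n))) : Prop :=
  ∃ (v : Fin n) (wk : (clientGraph C).Walk v v), wk.IsCycle ∧
    (η : ℝ) / 6 ≤ (wk.length : ℝ)

theorem won_mono (n η : ℕ) {C C' : Finset (Sym2 (Fin n))} (h : C ⊆ C') :
    Won n η C → Won n η C' := by
  rintro ⟨v, wk, hc, hl⟩
  have hle : clientGraph C ≤ clientGraph C' :=
    SimpleGraph.fromEdgeSet_mono (by exact_mod_cast Finset.coe_subset.mpr h)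
  refine ⟨v, wk.mapLe hle, (Walk.mapLe_isCycle hle).mpr hc, ?_⟩
  have : (wk.mapLe hle).length = wk.length := Walk.length_map _ _
  rw [this]
  exact hl

theorem knBoard_card_ge (n r : ℕ) (h : r ≤ n * (n - 1) / 2) : r ≤ (knBoard n).card := by
  classical
  have h1 : knBoard n = (⊤ : SimpleGraph (Fin n)).edgeFinset := by
    rw [SimpleGraph.edgeFinset_top]
    ext e; simp [knBoard, Sym2.mem_diagSet]
  have h2 : (knBoard n).card = (Fintype.card (Fin n)).choose 2 := by
    rw [h1]; exact SimpleGraph.card_edgeFinset_top_eq_card_choose_two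
  rw [h2, Fintype.card_fin, Nat.choose_two_right]
  exact h


section MainStep

variable {n η : ℕ} (hn : 0 < n)

/-- The invariant maintained by Waiter. -/
def Inv (n η : ℕ) (hn : 0 < n) (F C : Finset (Sym2 (Fin n))) : Prop :=
  (∃ r, r ≤ kpar n η ∧ ∃ X : ℕ → Fin n, ∃ B : Finset (Sym2 (Fin n)),
    (∀ a b, a ≤ r → b ≤ r → X a = X b → a = b) ∧
    X 0 = ⟨0, hn⟩ ∧
    (∀ t, t < r → X (t + 1) ∈ Tset n η hn t) ∧
    C = (Finset.range r).image (fun t => s(X t, X (t + 1))) ∧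
    B.card ≤ ((n - η) + 1) * r ∧
    (∀ e ∈ B, ∃ t, t < r ∧ ∃ z : Fin n, e = s(X t, z) ∧ z ∈ Tset n η hn t ∧
      ∀ a, a ≤ t → z ≠ X a) ∧
    knBoard n \ B ⊆ F)
  ∨ Won n η C

omit hn in
theorem mem_knBoard {e : Sym2 (Fin n)} : e ∈ knBoard n ↔ ¬ e.IsDiag := by
  simp [knBoard]

omit hn in
theorem inv_F_large (pk : Pack n η) {F : Finset (Sym2 (Fin n))}
    {r : ℕ} (hrk : r ≤ kpar n η) {B : Finset (Sym2 (Fin n))}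
    (hBcard : B.card ≤ ((n - η) + 1) * r) (hFB : knBoard n \ B ⊆ F) :
    (n - η) + 1 ≤ F.card := by
  have h1 : (kpar n η + 2) * ((n - η) + 1) ≤ (knBoard n).card :=
    knBoard_card_ge n _ pk.hboard
  have h2 : (knBoard n).card ≤ (knBoard n \ B).card + B.card :=
    Finset.card_le_card_sdiff_add_card
  have h3 : (knBoard n \ B).card ≤ F.card := Finset.card_le_card hFB
  have h4 : B.card ≤ ((n - η) + 1) * kpar n η :=
    le_trans hBcard (Nat.mul_le_mul_left _ hrk)
  have h5 : (kpar n η + 2) * ((n - η) + 1) =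
      ((n - η) + 1) * kpar n η + 2 * ((n - η) + 1) := by ring
  omega

theorem inv_step (pk : Pack n η) (F C : Finset (Sym2 (Fin n))) (hI : Inv n η hn F C) :
    (F.card < (n - η) + 1 → Won n η C) ∧
    ((n - η) + 1 ≤ F.card → ∃ O ⊆ F, O.card = (n - η) + 1 ∧
      ∀ x ∈ O, Inv n η hn (F \ O) (insert x C)) := by
  classical
  have hn2 : 2 ≤ n := by have := pk.hn; omega
  have hwpos : 0 < wpar η := by unfold wpar; omega
  have hQpos : 0 < Qpar n η := by unfold Qpar; omega
  have hQD : Qpar n η ≤ n - 1 := by have := pk.hQG; omega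
  rcases hI with ⟨r, hrk, X, B, hinj, hX0, hXT, hC, hBcard, hBshape, hFB⟩ | hwon
  · -- playing state
    constructor
    · intro hsmall
      exact absurd (inv_F_large pk hrk hBcard hFB) (by omega)
    intro hlarge
    rcases Nat.lt_or_ge r (kpar n η) with hrlt | hrge
    · -- ===================== extension round =====================
      set pathv : Finset (Fin n) := (Finset.range (r + 1)).image X with hpathv
      have hpathcard : pathv.card ≤ r + 1 := by
        calc pathv.card ≤ (Finset.range (r + 1)).card := Finset.card_image_le
          _ = r + 1 := Finset.card_range _
      have hTc : (Tset n η hn r).card = Qpar n η := Tset_card hn hn2 hQD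
      have hTfree : (n - η) + 1 ≤ ((Tset n η hn r) \ pathv).card := by
        have h1 : (Tset n η hn r).card ≤ ((Tset n η hn r) \ pathv).card + pathv.card :=
          Finset.card_le_card_sdiff_add_card
        have h2 : Qpar n η = (n - η) + kpar n η + 2 := rfl
        omega
      set Tfree := (Tset n η hn r) \ pathv with hTfreedef
      set Ew : Finset (Sym2 (Fin n)) := Tfree.image (fun v => s(X r, v)) with hEw
      have hEcard : Ew.card = Tfree.card := by
        rw [hEw]
        apply Finset.card_image_of_injOn
        intro a _ b _ hab
        exact Sym2.congr_right.mp hab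
      have hXrpath : X r ∈ pathv := by
        rw [hpathv]
        exact Finset.mem_image.mpr ⟨r, Finset.mem_range.mpr (by omega), rfl⟩
      have hmempath : ∀ a, a ≤ r → X a ∈ pathv := by
        intro a ha
        exact Finset.mem_image.mpr ⟨a, Finset.mem_range.mpr (by omega), rfl⟩
      have hEF : Ew ⊆ F := by
        intro e he
        rw [hEw] at he
        obtain ⟨v, hv, rfl⟩ := Finset.mem_image.mp he
        rw [hTfreedef, Finset.mem_sdiff] at hv
        obtain ⟨hvT, hvp⟩ := hv
        have hvXr : v ≠ X r := fun h => hvp (h ▸ hXrpath)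
        apply hFB
        rw [Finset.mem_sdiff]
        refine ⟨?_, ?_⟩
        · rw [mem_knBoard, Sym2.mk_isDiag_iff]
          exact fun h => hvXr h.symm
        · intro heB
          obtain ⟨t, htr, z, heq, hzT, hzpath⟩ := hBshape _ heB
          rw [Sym2.eq_iff] at heq
          rcases heq with ⟨h1, h2⟩ | ⟨h1, h2⟩
          · exact absurd (hinj r t (le_refl r) (by omega) h1) (by omega)
          · exact hvp (h2 ▸ hmempath t (by omega))
      obtain ⟨O, hOE, hOcard⟩ := Finset.exists_subset_card_eq
        (le_trans hTfree (le_of_eq hEcard.symm))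
      refine ⟨O, le_trans hOE hEF, hOcard, ?_⟩
      intro x hxO
      obtain ⟨v, hv, hxv⟩ := Finset.mem_image.mp (hOE hxO)
      rw [hTfreedef, Finset.mem_sdiff] at hv
      obtain ⟨hvT, hvp⟩ := hv
      set X' := Function.update X (r + 1) v with hX'
      have hX'agree : ∀ a, a ≤ r → X' a = X a := by
        intro a ha
        rw [hX']
        exact Function.update_of_ne (by omega) _ _
      have hX'new : X' (r + 1) = v := by rw [hX']; exact Function.update_self _ _ _
      left
      refine ⟨r + 1, by omega, X', B ∪ O, ?_, ?_, ?_, ?_, ?_, ?_, ?_⟩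
      · intro a b ha hb heq
        rcases Nat.lt_or_ge a (r + 1) with ha' | ha' <;>
          rcases Nat.lt_or_ge b (r + 1) with hb' | hb'
        · have h1 : X' a = X a := hX'agree a (by omega)
          have h2 : X' b = X b := hX'agree b (by omega)
          exact hinj a b (by omega) (by omega) (by rw [h1, h2] at heq; exact heq)
        · have hb1 : b = r + 1 := by omega
          exfalso
          apply hvp
          rw [hb1, hX'new] at heq
          rw [← heq, hX'agree a (by omega)]
          exact hmempath a (by omega)
        · have ha1 : a = r + 1 := by omega
          exfalso
          apply hvp
          rw [ha1, hX'new] at heq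
          rw [heq, hX'agree b (by omega)]
          exact hmempath b (by omega)
        · omega
      · rw [hX'agree 0 (by omega)]; exact hX0
      · intro t ht
        rcases Nat.lt_or_ge t r with ht' | ht'
        · rw [show X' (t + 1) = X (t + 1) from hX'agree _ (by omega)]
          exact hXT t ht'
        · have htr : t = r := by omega
          rw [htr, hX'new]
          exact hvT
      · rw [Finset.range_add_one, Finset.image_insert]
        have h1 : s(X' r, X' (r + 1)) = x := by
          rw [hX'agree r (le_refl r), hX'new, hxv]
        have h2 : (Finset.range r).image (fun t => s(X' t, X' (t + 1))) = C := by
          rw [hC]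
          apply Finset.image_congr
          intro t ht
          simp only [Finset.mem_coe, Finset.mem_range] at ht
          show s(X' t, X' (t + 1)) = s(X t, X (t + 1))
          rw [hX'agree t (by omega), hX'agree (t + 1) (by omega)]
        rw [h1, h2]
      · calc (B ∪ O).card ≤ B.card + O.card := Finset.card_union_le _ _
          _ ≤ ((n - η) + 1) * r + ((n - η) + 1) := by omega
          _ = ((n - η) + 1) * (r + 1) := by ring
      · intro e he
        rcases Finset.mem_union.mp he with heB | heO
        · obtain ⟨t, htr, z, heq, hzT, hzpath⟩ := hBshape e heB
          refine ⟨t, by omega, z, ?_, hzT, ?_⟩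
          · rw [hX'agree t (by omega)]; exact heq
          · intro a ha
            rw [hX'agree a (by omega)]
            exact hzpath a ha
        · obtain ⟨v', hv', rfl⟩ := Finset.mem_image.mp (hOE heO)
          rw [hTfreedef, Finset.mem_sdiff] at hv'
          refine ⟨r, by omega, v', ?_, hv'.1, ?_⟩
          · rw [hX'agree r (le_refl r)]
          · intro a ha
            rw [hX'agree a ha]
            intro hcon
            exact hv'.2 (hcon ▸ hmempath a ha)
      · intro e he
        rw [Finset.mem_sdiff] at he ⊢
        obtain ⟨heK, heBO⟩ := he
        rw [Finset.mem_union] at heBO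
        push_neg at heBO
        exact ⟨hFB (Finset.mem_sdiff.mpr ⟨heK, heBO.1⟩), heBO.2⟩
    · -- ===================== chord round =====================
      have hrk' : r = kpar n η := by omega
      subst hrk'
      have hDQG : (n - 1) = Qpar n η + Gpar n η := pk.hQG.symm
      have hcf := fun (j : ℕ) => count_free (Qpar n η) (wpar η) (n - 1) (mpar η)
          (Gpar n η) (gpar n η) ((X j).val - 1) hwpos hQpos hQD hDQG rfl
      choose S hS1 hS2 hS3 using hcf
      set J := Finset.Icc (kpar n η - Mpar n + 1) (kpar n η) with hJ
      have hkM : Mpar n ≤ kpar n η := by unfold kpar; omega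
      have hJcard : J.card = Mpar n := by rw [hJ, Nat.card_Icc]; omega
      have hwk : 0 < wpar η := hwpos
      have hmlt : mpar η < kpar n η - Mpar n + 1 := by
        unfold mpar kpar; omega
      have hSm : ∀ j, ∀ i ∈ S j, i ≤ mpar η := by
        intro j i hiS
        have := hS1 j hiS
        rw [Finset.mem_range] at this
        omega
      have hfree : ∀ j, ∀ i ∈ S j, X j ∉ Tset n η hn i := by
        intro j i hiS hmem
        obtain ⟨u, hu1, hu2, hu3⟩ := (mem_Tset_iff hn).mp hmem
        apply hS3 j i hiS u hu1 hu2
        have hval := vtx_val hn hn2 u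
        rw [hu3] at hval
        omega
      set chords : Finset (Sym2 (Fin n)) :=
        J.biUnion (fun j => (S j).image (fun i => s(X i, X j))) with hchords
      have hchords_card : (n - η) + 1 ≤ chords.card := by
        rw [hchords, Finset.card_biUnion]
        · have h1 : ∀ j ∈ J, min (mpar η + 1 - wpar η) (gpar n η - 1) ≤
              ((S j).image (fun i => s(X i, X j))).card := by
            intro j hj
            have hjlo : mpar η < j := by
              rw [hJ, Finset.mem_Icc] at hj; omega
            have hjhi : j ≤ kpar n η := by
              rw [hJ, Finset.mem_Icc] at hj; exact hj.2
            rw [Finset.card_image_of_injOn]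
            · exact hS2 j
            · intro a ha b hb hab
              have haJ : a ≤ mpar η := hSm j a ha
              have hbJ : b ≤ mpar η := hSm j b hb
              rw [Sym2.eq_iff] at hab
              rcases hab with ⟨h1, h2⟩ | ⟨h1, h2⟩
              · exact hinj a b (by omega) (by omega) h1
              · exfalso
                have := hinj a j (by omega) (by omega) h1
                omega
          calc (n - η) + 1
              ≤ Mpar n * min (mpar η + 1 - wpar η) (gpar n η - 1) := pk.hMmin
            _ = ∑ _j ∈ J, min (mpar η + 1 - wpar η) (gpar n η - 1) := by
                rw [Finset.sum_const, hJcard, smul_eq_mul]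
            _ ≤ ∑ j ∈ J, ((S j).image (fun i => s(X i, X j))).card :=
                Finset.sum_le_sum h1
        · intro j hj j' hj' hne
          apply Finset.disjoint_left.mpr
          intro e he he'
          obtain ⟨a, haS, hae⟩ := Finset.mem_image.mp he
          obtain ⟨b, hbS, hbe⟩ := Finset.mem_image.mp he'
          simp only [hJ, Finset.mem_coe, Finset.mem_Icc] at hj hj'
          have haa : a ≤ mpar η := hSm j a haS
          have hbb : b ≤ mpar η := hSm j' b hbS
          have heq : s(X a, X j) = s(X b, X j') := by rw [hae, hbe]
          rw [Sym2.eq_iff] at heq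
          rcases heq with ⟨h1, h2⟩ | ⟨h1, h2⟩
          · exact hne (hinj j j' (by omega) (by omega) h2)
          · have := hinj a j' (by omega) (by omega) h1
            omega
      have hchords_F : chords ⊆ F := by
        intro e he
        rw [hchords] at he
        obtain ⟨j, hj, he2⟩ := Finset.mem_biUnion.mp he
        obtain ⟨i, hiS, rfl⟩ := Finset.mem_image.mp he2
        rw [hJ, Finset.mem_Icc] at hj
        have him : i ≤ mpar η := hSm j i hiS
        have hij : i < j := by omega
        apply hFB
        rw [Finset.mem_sdiff]
        refine ⟨?_, ?_⟩
        · rw [mem_knBoard, Sym2.mk_isDiag_iff]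
          intro hcon
          have := hinj i j (by omega) (by omega) hcon
          omega
        · intro heB
          obtain ⟨t, htk, z, heq, hzT, hzpath⟩ := hBshape _ heB
          rw [Sym2.eq_iff] at heq
          rcases heq with ⟨h1, h2⟩ | ⟨h1, h2⟩
          · have hti : t = i := hinj t i (by omega) (by omega) h1.symm
            rw [hti] at hzT
            rw [← h2] at hzT
            exact hfree j i hiS hzT
          · have htj : t = j := hinj t j (by omega) (by omega) h2.symm
            exact hzpath i (by omega) h1.symm
      obtain ⟨O, hOc, hOcard⟩ := Finset.exists_subset_card_eq hchords_card
      refine ⟨O, le_trans hOc hchords_F, hOcard, ?_⟩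
      intro x hxO
      right
      obtain ⟨j, hj, hx2⟩ := Finset.mem_biUnion.mp (hOc hxO)
      obtain ⟨i, hiS, hxe⟩ := Finset.mem_image.mp hx2
      rw [hJ, Finset.mem_Icc] at hj
      have him : i ≤ mpar η := hSm j i hiS
      have hwm : wpar η + 1 ≤ j - i := by
        have h1 : mpar η = 2 * wpar η := rfl
        have h2 : kpar n η = 3 * wpar η + Mpar n := rfl
        omega
      have hadj : ∀ t, i ≤ t → t < j →
          (clientGraph (insert x C)).Adj (X t) (X (t + 1)) := by
        intro t ht1 ht2
        rw [clientGraph, SimpleGraph.fromEdgeSet_adj]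
        refine ⟨?_, ?_⟩
        · have hmem : s(X t, X (t + 1)) ∈ C := by
            rw [hC]
            exact Finset.mem_image.mpr ⟨t, Finset.mem_range.mpr (by omega), rfl⟩
          exact Finset.mem_coe.mpr (Finset.mem_insert_of_mem hmem)
        · intro hcon
          have := hinj t (t + 1) (by omega) (by omega) hcon
          omega
      have hchordadj : (clientGraph (insert x C)).Adj (X j) (X i) := by
        rw [clientGraph, SimpleGraph.fromEdgeSet_adj]
        refine ⟨?_, ?_⟩
        · have hswap : s(X j, X i) = x := by rw [← hxe]; exact Sym2.eq_swap
          rw [hswap]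
          exact Finset.mem_coe.mpr (Finset.mem_insert_self x C)
        · intro hcon
          have := hinj j i (by omega) (by omega) hcon
          omega
      obtain ⟨v, wk, hcyc, hlen⟩ := exists_cycle_of_chain (G := clientGraph (insert x C))
        X i j (by omega) (fun a b ha hb => hinj a b (by omega) (by omega)) hadj hchordadj
      refine ⟨v, wk, hcyc, ?_⟩
      rw [hlen]
      have h6 : η ≤ 6 * (j - i + 1) := by have := pk.hw6; omega
      rw [div_le_iff₀ (by norm_num : (0:ℝ) < 6)]
      calc (η : ℝ) ≤ ((6 * (j - i + 1) : ℕ) : ℝ) := Nat.cast_le.mpr h6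
        _ = ((j - i + 1 : ℕ) : ℝ) * 6 := by push_cast; ring
  · -- already won
    refine ⟨fun _ => hwon, fun hlarge => ?_⟩
    obtain ⟨O, hOF, hOcard⟩ := Finset.exists_subset_card_eq hlarge
    exact ⟨O, hOF, hOcard, fun x _ => Or.inr (won_mono n η (Finset.subset_insert x C) hwon)⟩

end MainStep

end WCG


/-- Let `10 n^{3/4} ≤ η ≤ n - 1` and `q = n - η`.  In the `(q : 1)`
Waiter-Client game on `E(K_n)` Waiter has a strategy ensuring that at the end of the game
Client's graph contains a cycle of length at least `η / 6`. -/
theorem statement12 (n η : ℕ) (hn : 0 < n)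
    (hη : 10 * (n : ℝ) ^ ((3 : ℝ) / 4) ≤ (η : ℝ)) (hη' : η ≤ n - 1) :
    WaiterCanForce (n - η)
      (fun C : Finset (Sym2 (Fin n)) =>
        ∃ (v : Fin n) (w : (clientGraph C).Walk v v), w.IsCycle ∧
          (η : ℝ) / 6 ≤ (w.length : ℝ))
      (knBoard n) ∅ := by
  classical
  have hηn : η + 1 ≤ n := by omega
  have h4 : 10000 * n ^ 3 ≤ η ^ 4 := by
    have h0 : (0:ℝ) ≤ 10 * (n : ℝ) ^ ((3:ℝ)/4) := by positivity
    have h1 : (10 * (n : ℝ) ^ ((3:ℝ)/4)) ^ (4:ℕ) ≤ (η:ℝ) ^ (4:ℕ) :=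
      pow_le_pow_left₀ h0 hη 4
    have h2 : ((n:ℝ) ^ ((3:ℝ)/4)) ^ (4:ℕ) = (n:ℝ) ^ (3:ℕ) := by
      rw [← Real.rpow_natCast ((n:ℝ) ^ ((3:ℝ)/4)) 4,
        ← Real.rpow_mul (Nat.cast_nonneg n)]
      rw [show ((3:ℝ)/4) * ((4:ℕ):ℝ) = ((3:ℕ):ℝ) by norm_num, Real.rpow_natCast]
    rw [mul_pow, h2] at h1
    have h3 : (10:ℝ) ^ (4:ℕ) = 10000 := by norm_num
    rw [h3] at h1
    exact_mod_cast h1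
  have pk := WCG.pack_of n η h4 hηn
  have hinv0 : WCG.Inv n η hn (knBoard n) ∅ := by
    left
    refine ⟨0, Nat.zero_le _, (fun _ => ⟨0, hn⟩), ∅, ?_, rfl, ?_, ?_, ?_, ?_, ?_⟩
    · intro a b ha hb _; omega
    · intro t ht; omega
    · simp
    · simp
    · intro e he; simp at he
    · rw [Finset.sdiff_empty]
  exact waiterCanForce_of_inv (n - η) _ (WCG.Inv n η hn)
    (fun F C hI => WCG.inv_step hn pk F C hI) (knBoard n) ∅ hinv0
end
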